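/- arXiv:1401.2506 — 11 statements merged into one kernel-verified Lean document; each statement's English description precedes it below -/
import Mathlib

section
/- Let a, b, c, d ∈ ℂ with a·d − b·c ≠ 0, and let Γ ⊆ ℂ be Carleson with some constant C. Then the image Γ' = {(a·z + b)/(c·z + d) : z ∈ Γ, c·z + d ≠ 0} of Γ under the linear fractional transformation ψ(z) = (az+b)/(cz+d) is Carleson with some constant C' (i.e., there exists C' > 0 such that μ(Γ' ∩ D(w,r)) ≤ C'·r for all w ∈ ℂ and r > 0). -/
open MeasureTheory Metric Set
open scoped ENNReal NNReal

/-- Carleson property with constant `C`. -/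
abbrev Carl (C : ℝ) (S : Set ℂ) : Prop :=
  ∀ (z : ℂ) (r : ℝ), 0 < r → μH[1] (S ∩ ball z r) ≤ ENNReal.ofReal (C * r)

private lemma exists_dyadic' {x : ℝ} (hx : 1 ≤ x) :
    ∃ n : ℕ, 2 ^ n ≤ x ∧ x < 2 ^ (n + 1) := by
  classical
  obtain ⟨N, hN⟩ := pow_unbounded_of_one_lt x (by norm_num : (1:ℝ) < 2)
  have hPN : x < 2 ^ (N + 1) := lt_of_lt_of_le hN (by
    apply pow_le_pow_right₀ (by norm_num) (Nat.le_succ N))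
  have hex : ∃ n, x < 2 ^ (n + 1) := ⟨N, hPN⟩
  refine ⟨Nat.find hex, ?_, Nat.find_spec hex⟩
  rcases Nat.eq_zero_or_pos (Nat.find hex) with h0 | hpos
  · rw [h0]; simpa using hx
  · have := Nat.find_min hex (Nat.sub_lt hpos one_pos)
    push_neg at this
    calc (2:ℝ) ^ Nat.find hex = 2 ^ (Nat.find hex - 1 + 1) := by
          congr 1; omega
      _ ≤ x := this

private lemma lip_inv_on {m : ℝ} (hm : 0 < m) :
    LipschitzOnWith ((m ^ 2)⁻¹).toNNReal (Inv.inv : ℂ → ℂ) {z : ℂ | m ≤ ‖z‖} := by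
  apply LipschitzOnWith.of_dist_le_mul
  intro x hx y hy
  have hx' : m ≤ ‖x‖ := hx
  have hy' : m ≤ ‖y‖ := hy
  have hx0 : x ≠ 0 := by intro h; rw [h] at hx'; simp at hx'; linarith
  have hy0 : y ≠ 0 := by intro h; rw [h] at hy'; simp at hy'; linarith
  rw [dist_inv_inv₀ hx0 hy0, Real.coe_toNNReal _ (by positivity)]
  have hxy : m ^ 2 ≤ ‖x‖ * ‖y‖ := by nlinarith
  have h0 : (0:ℝ) < m ^ 2 := by positivity
  calc dist x y / (‖x‖ * ‖y‖) ≤ dist x y / m ^ 2 := by gcongr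
    _ = (m ^ 2)⁻¹ * dist x y := by rw [div_eq_inv_mul]

private lemma inv_image_measure {m : ℝ} (hm : 0 < m) {s : Set ℂ}
    (hs : s ⊆ {z : ℂ | m ≤ ‖z‖}) :
    μH[1] (Inv.inv '' s) ≤ ENNReal.ofReal ((m ^ 2)⁻¹) * μH[1] s := by
  have := ((lip_inv_on hm).mono hs).hausdorffMeasure_image_le (zero_le_one)
  simpa [ENNReal.rpow_one, ENNReal.ofReal] using this

private lemma carl_affine {C : ℝ} {S : Set ℂ} (h : Carl C S) (k t : ℂ)
    (hk : k ≠ 0) : Carl C ((fun z => k * z + t) '' S) := by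
  intro w r hr
  have hk' : 0 < ‖k‖ := norm_pos_iff.mpr hk
  have hpre : (fun z : ℂ => k * z + t) ⁻¹' ball w r = ball ((w - t) / k) (r / ‖k‖) := by
    ext z
    simp only [mem_preimage, mem_ball, dist_eq_norm]
    have hz : z - (w - t) / k = (k * z + t - w) / k := by field_simp; ring
    rw [hz, norm_div]
    exact (div_lt_div_iff_of_pos_right hk').symm
  have himg : (fun z : ℂ => k * z + t) '' S ∩ ball w r
      = (fun z : ℂ => k * z + t) '' (S ∩ (fun z : ℂ => k * z + t) ⁻¹' ball w r) := by
    rw [image_inter_preimage]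
  have hlip : LipschitzWith ‖k‖₊ (fun z : ℂ => k * z + t) := by
    apply LipschitzWith.of_dist_le_mul
    intro x y
    simp only [dist_eq_norm]
    have he : k * x + t - (k * y + t) = k * (x - y) := by ring
    rw [he, norm_mul, coe_nnnorm]
  calc μH[1] ((fun z : ℂ => k * z + t) '' S ∩ ball w r)
      = μH[1] ((fun z : ℂ => k * z + t) '' (S ∩ ball ((w - t) / k) (r / ‖k‖))) := by
        rw [himg, hpre]
    _ ≤ (‖k‖₊ : ℝ≥0∞) ^ (1 : ℝ) * μH[1] (S ∩ ball ((w - t) / k) (r / ‖k‖)) :=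
        hlip.hausdorffMeasure_image_le zero_le_one _
    _ ≤ (‖k‖₊ : ℝ≥0∞) ^ (1 : ℝ) * ENNReal.ofReal (C * (r / ‖k‖)) := by
        gcongr
        exact h _ _ (div_pos hr hk')
    _ = ENNReal.ofReal (C * r) := by
        rw [ENNReal.rpow_one, ← ENNReal.ofReal_coe_nnreal, coe_nnnorm, ← ENNReal.ofReal_mul (norm_nonneg k)]
        congr 1
        rw [mul_comm, show C * (r / ‖k‖) = C * r / ‖k‖ from by ring]
        exact div_mul_cancel₀ _ hk'.ne'

private lemma carl_inv_zero {C : ℝ} {S : Set ℂ} (h : Carl C S) (hC : 0 ≤ C) {R : ℝ}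
    (hR : 0 < R) :
    μH[1] (Inv.inv '' (S \ {0}) ∩ ball 0 R) ≤ ENNReal.ofReal (4 * C * R) := by
  set A : ℕ → Set ℂ := fun n => {z : ℂ | 2 ^ n / R ≤ ‖z‖ ∧ ‖z‖ < 2 ^ (n + 1) / R} with hA
  have hsub : Inv.inv '' (S \ {0}) ∩ ball 0 R ⊆ ⋃ n, Inv.inv '' (S ∩ A n) := by
    rintro w' ⟨⟨z, ⟨hzS, hz0⟩, rfl⟩, hw'⟩
    have hz0 : z ≠ 0 := hz0
    have hzn : 0 < ‖z‖ := norm_pos_iff.mpr hz0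
    rw [mem_ball_zero_iff, norm_inv] at hw'
    have h1 : 1 ≤ R * ‖z‖ := by
      have h2 := mul_lt_mul_of_pos_left hw' hzn
      rw [mul_inv_cancel₀ hzn.ne'] at h2
      nlinarith
    obtain ⟨n, hn1, hn2⟩ := exists_dyadic' h1
    refine mem_iUnion.mpr ⟨n, mem_image_of_mem _ ⟨hzS, ?_, ?_⟩⟩
    · rw [div_le_iff₀ hR]
      calc (2:ℝ) ^ n ≤ R * ‖z‖ := hn1
        _ = ‖z‖ * R := mul_comm _ _
    · rw [lt_div_iff₀ hR]
      calc ‖z‖ * R = R * ‖z‖ := mul_comm _ _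
        _ < 2 ^ (n + 1) := hn2
  have hterm : ∀ n : ℕ, μH[1] (Inv.inv '' (S ∩ A n))
      ≤ ENNReal.ofReal (2 * C * R * (2⁻¹ : ℝ) ^ n) := by
    intro n
    have hpow : (0:ℝ) < 2 ^ n / R := by positivity
    have hAm : S ∩ A n ⊆ {z : ℂ | 2 ^ n / R ≤ ‖z‖} := fun z hz => hz.2.1
    have hball : S ∩ A n ⊆ S ∩ ball 0 (2 ^ (n + 1) / R) := by
      intro z hz
      exact ⟨hz.1, mem_ball_zero_iff.mpr hz.2.2⟩
    calc μH[1] (Inv.inv '' (S ∩ A n))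
        ≤ ENNReal.ofReal (((2 ^ n / R) ^ 2)⁻¹) * μH[1] (S ∩ A n) :=
          inv_image_measure hpow hAm
      _ ≤ ENNReal.ofReal (((2 ^ n / R) ^ 2)⁻¹) * μH[1] (S ∩ ball 0 (2 ^ (n + 1) / R)) :=
          mul_le_mul_right (measure_mono hball) _
      _ ≤ ENNReal.ofReal (((2 ^ n / R) ^ 2)⁻¹) * ENNReal.ofReal (C * (2 ^ (n + 1) / R)) := by
          gcongr
          exact h _ _ (by positivity)
      _ = ENNReal.ofReal (2 * C * R * (2⁻¹ : ℝ) ^ n) := by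
          rw [← ENNReal.ofReal_mul (by positivity)]
          congr 1
          have h2 : (2:ℝ) ^ n ≠ 0 := by positivity
          field_simp
          rw [one_div, inv_pow]
          field_simp
          ring
  calc μH[1] (Inv.inv '' (S \ {0}) ∩ ball 0 R)
      ≤ μH[1] (⋃ n, Inv.inv '' (S ∩ A n)) := measure_mono hsub
    _ ≤ ∑' n, μH[1] (Inv.inv '' (S ∩ A n)) := measure_iUnion_le _
    _ ≤ ∑' n : ℕ, ENNReal.ofReal (2 * C * R * (2⁻¹ : ℝ) ^ n) := ENNReal.tsum_le_tsum hterm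
    _ = ∑' n : ℕ, ENNReal.ofReal (2 * C * R) * (2⁻¹ : ℝ≥0∞) ^ n := by
        congr 1
        funext n
        rw [ENNReal.ofReal_mul (by positivity), ENNReal.ofReal_pow (by norm_num)]
        congr 2
        rw [ENNReal.ofReal_inv_of_pos (by norm_num)]
        norm_num
    _ = ENNReal.ofReal (2 * C * R) * (1 - 2⁻¹)⁻¹ := by
        rw [ENNReal.tsum_mul_left, ENNReal.tsum_geometric]
    _ = ENNReal.ofReal (4 * C * R) := by
        rw [ENNReal.one_sub_inv_two, inv_inv]
        rw [show (2 : ℝ≥0∞) = ENNReal.ofReal 2 by norm_num,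
          ← ENNReal.ofReal_mul (by positivity)]
        congr 1
        ring

private lemma carl_inv {C : ℝ} {S : Set ℂ} (h : Carl C S) (hC : 0 ≤ C) :
    Carl (12 * C) (Inv.inv '' (S \ {0})) := by
  intro w r hr
  by_cases hw : ‖w‖ ≤ 2 * r
  · have hball : ball w r ⊆ ball 0 (3 * r) := by
      apply ball_subset_ball'
      rw [dist_zero_right]
      linarith
    calc μH[1] (Inv.inv '' (S \ {0}) ∩ ball w r)
        ≤ μH[1] (Inv.inv '' (S \ {0}) ∩ ball 0 (3 * r)) :=
          measure_mono (inter_subset_inter_right _ hball)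
      _ ≤ ENNReal.ofReal (4 * C * (3 * r)) := carl_inv_zero h hC (by positivity)
      _ = ENNReal.ofReal (12 * C * r) := by ring_nf
  · push_neg at hw
    have hwn : 0 < ‖w‖ := lt_trans (by positivity) hw
    have hw0 : w ≠ 0 := norm_pos_iff.mp hwn
    set m : ℝ := 2 / (3 * ‖w‖) with hm
    set ρ : ℝ := 2 * r / ‖w‖ ^ 2 with hρ
    have hmpos : 0 < m := by positivity
    have hρpos : 0 < ρ := by positivity
    have hsub : Inv.inv '' (S \ {0}) ∩ ball w r
        ⊆ Inv.inv '' (S ∩ ball w⁻¹ ρ ∩ {z : ℂ | m ≤ ‖z‖}) := by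
      rintro w' ⟨⟨z, ⟨hzS, hz0⟩, rfl⟩, hw'⟩
      have hz0 : z ≠ 0 := hz0
      have hzn : 0 < ‖z‖ := norm_pos_iff.mpr hz0
      rw [mem_ball] at hw'
      have hd : dist z⁻¹ w = ‖z⁻¹ - w‖ := dist_eq_norm _ _
      have hub : ‖z⁻¹‖ < 3 / 2 * ‖w‖ := by
        calc ‖z⁻¹‖ = ‖z⁻¹ - w + w‖ := by ring_nf
          _ ≤ ‖z⁻¹ - w‖ + ‖w‖ := norm_add_le _ _
          _ < r + ‖w‖ := by rw [← hd]; linarith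
          _ < 3 / 2 * ‖w‖ := by linarith
      have hlb : ‖w‖ / 2 < ‖z⁻¹‖ := by
        have : ‖w‖ - ‖z⁻¹‖ ≤ ‖z⁻¹ - w‖ := by
          calc ‖w‖ - ‖z⁻¹‖ ≤ ‖w - z⁻¹‖ := norm_sub_norm_le _ _
            _ = ‖z⁻¹ - w‖ := norm_sub_rev _ _
        rw [← hd] at this
        linarith
      have hzinv : ‖z⁻¹‖ = ‖z‖⁻¹ := norm_inv z
      have hmem_lb : m ≤ ‖z‖ := by
        rw [hm]
        rw [div_le_iff₀ (by positivity)]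
        have h1 : ‖z‖⁻¹ < 3 / 2 * ‖w‖ := hzinv ▸ hub
        have h2 : 1 < ‖z‖ * (3 / 2 * ‖w‖) := by
          have h3 := mul_lt_mul_of_pos_left h1 hzn
          rwa [mul_inv_cancel₀ hzn.ne'] at h3
        nlinarith
      have hz_ball : z ∈ ball w⁻¹ ρ := by
        rw [mem_ball]
        have hzinv0 : z⁻¹ ≠ 0 := inv_ne_zero hz0
        have key : dist z w⁻¹ = dist z⁻¹ w / (‖z⁻¹‖ * ‖w‖) := by
          have := dist_inv_inv₀ hzinv0 hw0
          rwa [inv_inv] at this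
        rw [key, hρ]
        have hden : ‖w‖ ^ 2 / 2 ≤ ‖z⁻¹‖ * ‖w‖ := by nlinarith
        calc dist z⁻¹ w / (‖z⁻¹‖ * ‖w‖) ≤ dist z⁻¹ w / (‖w‖ ^ 2 / 2) := by gcongr
          _ < r / (‖w‖ ^ 2 / 2) := by gcongr
          _ = 2 * r / ‖w‖ ^ 2 := by ring
      exact mem_image_of_mem _ ⟨⟨hzS, hz_ball⟩, hmem_lb⟩
    calc μH[1] (Inv.inv '' (S \ {0}) ∩ ball w r)
        ≤ μH[1] (Inv.inv '' (S ∩ ball w⁻¹ ρ ∩ {z : ℂ | m ≤ ‖z‖})) := measure_mono hsub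
      _ ≤ ENNReal.ofReal ((m ^ 2)⁻¹) * μH[1] (S ∩ ball w⁻¹ ρ ∩ {z : ℂ | m ≤ ‖z‖}) :=
          inv_image_measure hmpos inter_subset_right
      _ ≤ ENNReal.ofReal ((m ^ 2)⁻¹) * μH[1] (S ∩ ball w⁻¹ ρ) :=
          mul_le_mul_right (measure_mono inter_subset_left) _
      _ ≤ ENNReal.ofReal ((m ^ 2)⁻¹) * ENNReal.ofReal (C * ρ) := by
          gcongr
          exact h _ _ hρpos
      _ ≤ ENNReal.ofReal (12 * C * r) := by
          rw [← ENNReal.ofReal_mul (by positivity)]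
          apply ENNReal.ofReal_le_ofReal
          rw [hm, hρ]
          have hw2 : (0:ℝ) < ‖w‖ ^ 2 := by positivity
          have e1 : ((2 / (3 * ‖w‖)) ^ 2)⁻¹ = 9 * ‖w‖ ^ 2 / 4 := by
            rw [div_pow, inv_div]
            ring
          have e2 : 9 * ‖w‖ ^ 2 / 4 * (C * (2 * r / ‖w‖ ^ 2))
              = 9 / 2 * C * r * (‖w‖ ^ 2 / ‖w‖ ^ 2) := by ring
          rw [e1, e2, div_self (pow_ne_zero 2 hwn.ne'), mul_one]
          nlinarith

/-- The image of a Carleson set `Γ ⊆ ℂ` under a linear fractional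
transformation `ψ(z) = (az+b)/(cz+d)` (with `ad - bc ≠ 0`) is again Carleson,
with some constant `C' > 0`. -/
theorem statement0 (a b c d : ℂ) (habcd : a * d - b * c ≠ 0) (Γ : Set ℂ)
    (C : ℝ) (hC : 0 < C)
    (hCar : ∀ (z : ℂ) (r : ℝ), 0 < r →
      μH[1] (Γ ∩ ball z r) ≤ ENNReal.ofReal (C * r)) :
    ∃ C' : ℝ, 0 < C' ∧ ∀ (w : ℂ) (r : ℝ), 0 < r →
      μH[1] ({w' : ℂ | ∃ z ∈ Γ, c * z + d ≠ 0 ∧ w' = (a * z + b) / (c * z + d)} ∩ ball w r)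
        ≤ ENNReal.ofReal (C' * r) := by
  refine ⟨12 * C, by positivity, ?_⟩
  have hCarl : Carl C Γ := hCar
  by_cases hc : c = 0
  · -- affine case
    subst hc
    have hd : d ≠ 0 := by
      intro h; apply habcd; rw [h]; ring
    have ha : a ≠ 0 := by
      intro h; apply habcd; rw [h]; ring
    have hset : {w' : ℂ | ∃ z ∈ Γ, 0 * z + d ≠ 0 ∧ w' = (a * z + b) / (0 * z + d)}
        = (fun z => (a / d) * z + b / d) '' Γ := by
      ext w'
      simp only [mem_setOf_eq, mem_image]
      constructor
      · rintro ⟨z, hz, _, rfl⟩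
        exact ⟨z, hz, by rw [zero_mul, zero_add]; field_simp⟩
      · rintro ⟨z, hz, rfl⟩
        exact ⟨z, hz, by simpa using hd, by rw [zero_mul, zero_add]; field_simp⟩
    rw [hset]
    intro w r hr
    calc μH[1] ((fun z => (a / d) * z + b / d) '' Γ ∩ ball w r)
        ≤ ENNReal.ofReal (C * r) :=
          carl_affine hCarl (a / d) (b / d) (div_ne_zero ha hd) w r hr
      _ ≤ ENNReal.ofReal (12 * C * r) := by
          apply ENNReal.ofReal_le_ofReal
          nlinarith
  · -- general case: ψ(z) = a/c + k / (z + d/c), k = (b*c - a*d)/c²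
    set k : ℂ := (b * c - a * d) / c ^ 2 with hk
    have hk0 : k ≠ 0 := by
      rw [hk]
      apply div_ne_zero
      · intro h; apply habcd
        have : b * c = a * d := by linear_combination h
        linear_combination -this
      · exact pow_ne_zero 2 hc
    have h1 : Carl C ((fun z => 1 * z + d / c) '' Γ) := carl_affine hCarl 1 (d / c) one_ne_zero
    have h2 : Carl (12 * C) (Inv.inv '' (((fun z => 1 * z + d / c) '' Γ) \ {0})) :=
      carl_inv h1 hC.le
    have h3 : Carl (12 * C)
        ((fun z => k * z + a / c) '' (Inv.inv '' (((fun z => 1 * z + d / c) '' Γ) \ {0}))) :=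
      carl_affine h2 k (a / c) hk0
    have hval : ∀ z : ℂ, c * z + d ≠ 0 →
        (a * z + b) / (c * z + d) = k * (z + d / c)⁻¹ + a / c := by
      intro z hcz
      have hzd : z + d / c = (c * z + d) / c := by field_simp
      rw [hk, hzd, inv_div]
      field_simp
      rw [mul_comm z c, div_add' _ _ _ hcz, div_left_inj' hcz]
      ring
    have hset : {w' : ℂ | ∃ z ∈ Γ, c * z + d ≠ 0 ∧ w' = (a * z + b) / (c * z + d)}
        = (fun z => k * z + a / c) '' (Inv.inv '' (((fun z => 1 * z + d / c) '' Γ) \ {0})) := by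
      ext w'
      constructor
      · rintro ⟨z, hz, hcz, rfl⟩
        have hzd0 : z + d / c ≠ 0 := by
          have he : z + d / c = (c * z + d) / c := by field_simp
          rw [he]; exact div_ne_zero hcz hc
        have hmem : (z + d / c)⁻¹ ∈ Inv.inv '' (((fun z => 1 * z + d / c) '' Γ) \ {0}) :=
          mem_image_of_mem _ ⟨⟨z, hz, by ring⟩, hzd0⟩
        have : (a * z + b) / (c * z + d) = k * (z + d / c)⁻¹ + a / c := hval z hcz
        exact this ▸ mem_image_of_mem _ hmem
      · rintro ⟨x, ⟨y, ⟨⟨z, hz, rfl⟩, hy0⟩, rfl⟩, rfl⟩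
        have hy0' : z + d / c ≠ 0 := by simpa using hy0
        have hcz : c * z + d ≠ 0 := by
          intro h
          apply hy0'
          have he : z + d / c = (c * z + d) / c := by field_simp
          rw [he, h, zero_div]
        refine ⟨z, hz, hcz, ?_⟩
        simp only [one_mul]
        exact (hval z hcz).symm
    rw [hset]
    exact h3
end

section
/- Let Γ ⊆ ℂ \ {0} be Carleson with constant C. Then the image Γ' = {1/z : z ∈ Γ} of Γ under the inversion z ↦ 1/z satisfies μ(Γ' ∩ D(w,r)) ≤ 16·C·r for every w ∈ Γ' and every r > 0. -/
open MeasureTheory Metric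
open scoped ENNReal NNReal

private lemma inv_lip_bound {m : ℝ} (hm : 0 < m) {S : Set ℂ} (hS : ∀ z ∈ S, m ≤ ‖z‖) :
    μH[1] ((fun z : ℂ => z⁻¹) '' S) ≤ ENNReal.ofReal (m⁻¹ * m⁻¹) * μH[1] S := by
  have hlip : LipschitzOnWith (m⁻¹ * m⁻¹).toNNReal (fun z : ℂ => z⁻¹) S := by
    apply LipschitzOnWith.of_dist_le_mul
    intro x hx y hy
    have hmx := hS x hx
    have hmy := hS y hy
    have hx0 : x ≠ 0 := by
      intro h; rw [h, norm_zero] at hmx; linarith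
    have hy0 : y ≠ 0 := by
      intro h; rw [h, norm_zero] at hmy; linarith
    have hxp : (0:ℝ) < ‖x‖ := lt_of_lt_of_le hm hmx
    have hyp : (0:ℝ) < ‖y‖ := lt_of_lt_of_le hm hmy
    have hdiff : x⁻¹ - y⁻¹ = (y - x) * (x⁻¹ * y⁻¹) := by
      field_simp
    rw [dist_eq_norm, dist_eq_norm, hdiff, norm_mul, norm_mul, norm_inv, norm_inv,
      Real.coe_toNNReal _ (by positivity), norm_sub_rev]
    have h1 : ‖x‖⁻¹ ≤ m⁻¹ := inv_anti₀ hm hmx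
    have h2 : ‖y‖⁻¹ ≤ m⁻¹ := inv_anti₀ hm hmy
    have := norm_nonneg (x - y)
    calc ‖x - y‖ * (‖x‖⁻¹ * ‖y‖⁻¹) ≤ ‖x - y‖ * (m⁻¹ * m⁻¹) := by
          apply mul_le_mul_of_nonneg_left _ this
          exact mul_le_mul h1 h2 (by positivity) (by positivity)
      _ = m⁻¹ * m⁻¹ * ‖x - y‖ := by ring
  have h := hlip.hausdorffMeasure_image_le (zero_le_one : (0:ℝ) ≤ 1)
  rw [ENNReal.rpow_one] at h
  have heq : ENNReal.ofReal (m⁻¹ * m⁻¹) = ((m⁻¹ * m⁻¹).toNNReal : ℝ≥0∞) := rfl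
  rw [heq]
  exact h

private lemma ofReal_aux {C : ℝ} (a ρ x : ℝ) (ha : 0 ≤ a) (hρ : 0 ≤ ρ)
    (h : a * ρ ≤ x) : ENNReal.ofReal a * ENNReal.ofReal (C * ρ) ≤ ENNReal.ofReal (C * x) := by
  rcases le_or_gt C 0 with hC | hC
  · have h1 : C * ρ ≤ 0 := mul_nonpos_of_nonpos_of_nonneg hC hρ
    simp [ENNReal.ofReal_eq_zero.mpr h1]
  · rw [← ENNReal.ofReal_mul ha]
    exact ENNReal.ofReal_le_ofReal (by nlinarith)

/-- If `Γ ⊆ ℂ \ {0}` is Carleson with constant `C`, then its image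
under inversion `z ↦ 1/z` satisfies `μ(Γ' ∩ D(w,r)) ≤ 16·C·r` for every
`w ∈ Γ'` and `r > 0`. -/
theorem statement1 (Γ : Set ℂ) (hΓ : (0 : ℂ) ∉ Γ) (C : ℝ)
    (hCar : ∀ (z : ℂ) (r : ℝ), 0 < r →
      μH[1] (Γ ∩ ball z r) ≤ ENNReal.ofReal (C * r)) :
    ∀ w ∈ (fun z : ℂ => z⁻¹) '' Γ, ∀ r : ℝ, 0 < r →
      μH[1] ((fun z : ℂ => z⁻¹) '' Γ ∩ ball w r) ≤ ENNReal.ofReal (16 * C * r) := by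
  rintro w ⟨z₀, hz₀, rfl⟩ r hr
  have hz₀0 : z₀ ≠ 0 := fun h => hΓ (h ▸ hz₀)
  set nw : ℝ := ‖z₀⁻¹‖ with hnw_def
  have hnw : 0 < nw := by
    simp only [hnw_def, norm_pos_iff]
    exact inv_ne_zero hz₀0
  have hr3 : (0:ℝ) < 3 * r := by linarith
  rcases le_or_gt (2 * r) nw with h2r | h2r
  · -- Case A : r is small compared to ‖w‖
    set S : Set ℂ := Γ ∩ {z | z⁻¹ ∈ ball z₀⁻¹ r} with hS_def
    have hsub : (fun z : ℂ => z⁻¹) '' Γ ∩ ball z₀⁻¹ r ⊆ (fun z : ℂ => z⁻¹) '' S := by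
      rintro ζ ⟨⟨z, hz, rfl⟩, hb⟩
      exact ⟨z, ⟨hz, hb⟩, rfl⟩
    -- basic facts about elements of S
    have hfacts : ∀ z ∈ S, 2 / (3 * nw) ≤ ‖z‖ ∧ ‖z‖ < 2 / nw := by
      rintro z ⟨_, hb⟩
      have hb' : ‖z⁻¹ - z₀⁻¹‖ < r := by
        simpa [mem_ball, dist_eq_norm] using hb
      have hz0 : z ≠ 0 := by
        intro h
        rw [h, inv_zero, zero_sub, norm_neg] at hb'
        linarith
      have hzp : (0:ℝ) < ‖z‖ := norm_pos_iff.mpr hz0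
      have hinv : ‖z⁻¹‖ = ‖z‖⁻¹ := norm_inv z
      have hub : ‖z‖⁻¹ < nw + r := by
        have : ‖z⁻¹‖ ≤ ‖z₀⁻¹‖ + ‖z⁻¹ - z₀⁻¹‖ := norm_le_norm_add_norm_sub' _ _
        rw [hinv] at this
        linarith
      have hlb : nw - r < ‖z‖⁻¹ := by
        have : ‖z₀⁻¹‖ - ‖z⁻¹‖ ≤ ‖z⁻¹ - z₀⁻¹‖ := by
          have := norm_sub_norm_le (z₀⁻¹) (z⁻¹)
          rwa [norm_sub_rev] at this
        rw [hinv] at this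
        linarith
      have hmul : ‖z‖ * ‖z‖⁻¹ = 1 := mul_inv_cancel₀ hzp.ne'
      constructor
      · rw [div_le_iff₀ (by positivity)]
        have h3 : ‖z‖⁻¹ < 3 / 2 * nw := by linarith
        nlinarith [mul_lt_mul_of_pos_left h3 hzp]
      · rw [lt_div_iff₀ hnw]
        have h3 : nw / 2 < ‖z‖⁻¹ := by linarith
        nlinarith [mul_lt_mul_of_pos_left h3 hzp]
    have hSm : ∀ z ∈ S, 2 / (3 * nw) ≤ ‖z‖ := fun z hz => (hfacts z hz).1
    have hsub2 : S ⊆ Γ ∩ ball z₀ (3 * r / nw ^ 2) := by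
      rintro z ⟨hzΓ, hb⟩
      have hb' : ‖z⁻¹ - z₀⁻¹‖ < r := by
        simpa [mem_ball, dist_eq_norm] using hb
      have hz0 : z ≠ 0 := by
        intro h
        rw [h, inv_zero, zero_sub, norm_neg] at hb'
        linarith
      have hub : ‖z‖ < 2 / nw := (hfacts z ⟨hzΓ, hb⟩).2
      refine ⟨hzΓ, ?_⟩
      rw [mem_ball, dist_eq_norm]
      have hdiff : z - z₀ = (z⁻¹ - z₀⁻¹) * (z * z₀) * (-1) := by
        field_simp
        ring
      have hz₀n : ‖z₀‖ = nw⁻¹ := by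
        rw [hnw_def, norm_inv, inv_inv]
      have hnorm : ‖z - z₀‖ = ‖z⁻¹ - z₀⁻¹‖ * (‖z‖ * ‖z₀‖) := by
        rw [hdiff]
        simp [norm_mul, mul_assoc]
      rw [hnorm, hz₀n]
      have hzpos : (0:ℝ) ≤ ‖z‖ := norm_nonneg z
      have hnn : (0:ℝ) ≤ ‖z⁻¹ - z₀⁻¹‖ := norm_nonneg _
      have key : ‖z⁻¹ - z₀⁻¹‖ * (‖z‖ * nw⁻¹) ≤ r * ((2/nw) * nw⁻¹) := by
        apply mul_le_mul hb'.le _ (by positivity) hr.le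
        exact mul_le_mul_of_nonneg_right hub.le (by positivity)
      calc ‖z⁻¹ - z₀⁻¹‖ * (‖z‖ * nw⁻¹) ≤ r * ((2/nw) * nw⁻¹) := key
        _ < 3 * r / nw ^ 2 := by
          have heq : r * ((2/nw) * nw⁻¹) = 2 * r / nw ^ 2 := by
            field_simp
          rw [heq, div_lt_div_iff₀ (by positivity) (by positivity)]
          nlinarith [mul_pos hr (pow_pos hnw 2)]
    have hm : (0:ℝ) < 2 / (3 * nw) := by positivity
    have hball : μH[1] (Γ ∩ ball z₀ (3 * r / nw ^ 2)) ≤ ENNReal.ofReal (C * (3 * r / nw ^ 2)) :=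
      hCar z₀ _ (by positivity)
    calc μH[1] ((fun z : ℂ => z⁻¹) '' Γ ∩ ball z₀⁻¹ r)
        ≤ μH[1] ((fun z : ℂ => z⁻¹) '' S) := measure_mono hsub
      _ ≤ ENNReal.ofReal ((2/(3*nw))⁻¹ * (2/(3*nw))⁻¹) * μH[1] S := inv_lip_bound hm hSm
      _ ≤ ENNReal.ofReal ((2/(3*nw))⁻¹ * (2/(3*nw))⁻¹) *
            ENNReal.ofReal (C * (3 * r / nw ^ 2)) :=
          mul_le_mul_right (le_trans (measure_mono hsub2) hball) _
      _ ≤ ENNReal.ofReal (C * (16 * r)) := by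
          apply ofReal_aux _ _ _ (by positivity) (by positivity)
          have hkey : (2/(3*nw))⁻¹ * (2/(3*nw))⁻¹ * (3 * r / nw ^ 2) = 27 * r / 4 := by
            field_simp
            ring
          rw [hkey]
          linarith
      _ = ENNReal.ofReal (16 * C * r) := by ring_nf
  · -- Case B : r is large compared to ‖w‖
    set Sk : ℕ → Set ℂ := fun k =>
      Γ ∩ {z | 2 ^ k / (3 * r) < ‖z‖ ∧ ‖z‖ ≤ 2 ^ (k + 1) / (3 * r)} with hSk_def
    have hcov : (fun z : ℂ => z⁻¹) '' Γ ∩ ball z₀⁻¹ r ⊆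
        ⋃ k : ℕ, (fun z : ℂ => z⁻¹) '' Sk k := by
      rintro ζ ⟨⟨z, hz, rfl⟩, hb⟩
      have hz0 : z ≠ 0 := fun h => hΓ (h ▸ hz)
      have hzp : (0:ℝ) < ‖z‖ := norm_pos_iff.mpr hz0
      have hb' : ‖z⁻¹ - z₀⁻¹‖ < r := by
        simpa [mem_ball, dist_eq_norm] using hb
      have hinv : ‖z⁻¹‖ = ‖z‖⁻¹ := norm_inv z
      have hζ3 : ‖z‖⁻¹ < 3 * r := by
        have : ‖z⁻¹‖ ≤ ‖z₀⁻¹‖ + ‖z⁻¹ - z₀⁻¹‖ := norm_le_norm_add_norm_sub' _ _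
        rw [hinv] at this
        linarith
      have hmul : ‖z‖ * ‖z‖⁻¹ = 1 := mul_inv_cancel₀ hzp.ne'
      have hex : ∃ k : ℕ, 3 * r * ‖z‖ ≤ 2 ^ (k + 1) := by
        obtain ⟨n, hn⟩ := pow_unbounded_of_one_lt (3 * r * ‖z‖) (one_lt_two (α := ℝ))
        exact ⟨n, le_trans hn.le (pow_le_pow_right₀ one_le_two (Nat.le_succ n))⟩
      refine Set.mem_iUnion.mpr ⟨Nat.find hex, ⟨z, ⟨hz, ?_, ?_⟩, rfl⟩⟩
      · -- lower bound
        rcases Nat.eq_zero_or_pos (Nat.find hex) with h0 | h0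
        · rw [h0, pow_zero, div_lt_iff₀ hr3]
          nlinarith [mul_lt_mul_of_pos_left hζ3 hzp]
        · have hmin := Nat.find_min hex (Nat.sub_lt h0 one_pos)
          push_neg at hmin
          have h1 : (2:ℝ) ^ Nat.find hex < 3 * r * ‖z‖ := by
            calc (2:ℝ) ^ Nat.find hex = 2 ^ (Nat.find hex - 1 + 1) := by congr 1; omega
              _ < 3 * r * ‖z‖ := hmin
          rw [div_lt_iff₀ hr3]
          linarith
      · -- upper bound
        have := Nat.find_spec hex
        rw [le_div_iff₀ hr3]
        linarith
    have hEk : ∀ k : ℕ, μH[1] ((fun z : ℂ => z⁻¹) '' Sk k) ≤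
        ENNReal.ofReal ((1/2 : ℝ) ^ k * (8 * C * r)) := by
      intro k
      have h2k : (0:ℝ) < 2 ^ k := by positivity
      have hm : (0:ℝ) < 2 ^ k / (3 * r) := by positivity
      have hSm : ∀ z ∈ Sk k, 2 ^ k / (3 * r) ≤ ‖z‖ := fun z hz => hz.2.1.le
      have hsub2 : Sk k ⊆ Γ ∩ ball 0 (2 ^ (k + 3) / (9 * r)) := by
        rintro z ⟨hzΓ, _, hub⟩
        refine ⟨hzΓ, ?_⟩
        rw [mem_ball, dist_zero_right]
        calc ‖z‖ ≤ 2 ^ (k + 1) / (3 * r) := hub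
          _ < 2 ^ (k + 3) / (9 * r) := by
            rw [div_lt_div_iff₀ hr3 (by positivity), pow_add, pow_add]
            ring_nf
            nlinarith [h2k, hr]
      have hball : μH[1] (Γ ∩ ball 0 (2 ^ (k + 3) / (9 * r))) ≤
          ENNReal.ofReal (C * (2 ^ (k + 3) / (9 * r))) := hCar 0 _ (by positivity)
      calc μH[1] ((fun z : ℂ => z⁻¹) '' Sk k)
          ≤ ENNReal.ofReal ((2^k/(3*r))⁻¹ * (2^k/(3*r))⁻¹) * μH[1] (Sk k) :=
            inv_lip_bound hm hSm
        _ ≤ ENNReal.ofReal ((2^k/(3*r))⁻¹ * (2^k/(3*r))⁻¹) *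
              ENNReal.ofReal (C * (2 ^ (k + 3) / (9 * r))) :=
            mul_le_mul_right (le_trans (measure_mono hsub2) hball) _
        _ ≤ ENNReal.ofReal (C * ((1/2 : ℝ) ^ k * (8 * r))) := by
            apply ofReal_aux _ _ _ (by positivity) (by positivity)
            have hrne : r ≠ 0 := hr.ne'
            have h2kne : (2:ℝ) ^ k ≠ 0 := h2k.ne'
            have hkey : ((2:ℝ)^k/(3*r))⁻¹ * ((2:ℝ)^k/(3*r))⁻¹ * (2^(k+3)/(9*r))
                = (1/2 : ℝ)^k * (8*r) := by
              rw [inv_div, one_div, inv_pow, pow_add]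
              field_simp
              ring
            rw [hkey]
        _ = ENNReal.ofReal ((1/2 : ℝ) ^ k * (8 * C * r)) := by
            congr 1
            ring
    calc μH[1] ((fun z : ℂ => z⁻¹) '' Γ ∩ ball z₀⁻¹ r)
        ≤ μH[1] (⋃ k : ℕ, (fun z : ℂ => z⁻¹) '' Sk k) := measure_mono hcov
      _ ≤ ∑' k : ℕ, μH[1] ((fun z : ℂ => z⁻¹) '' Sk k) := measure_iUnion_le _
      _ ≤ ∑' k : ℕ, ENNReal.ofReal ((1/2 : ℝ) ^ k * (8 * C * r)) :=
          ENNReal.tsum_le_tsum hEk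
      _ = ∑' k : ℕ, (ENNReal.ofReal (1/2 : ℝ)) ^ k * ENNReal.ofReal (8 * C * r) := by
          refine tsum_congr fun k => ?_
          rw [ENNReal.ofReal_mul (by positivity), ENNReal.ofReal_pow (by norm_num)]
      _ = (∑' k : ℕ, (ENNReal.ofReal (1/2 : ℝ)) ^ k) * ENNReal.ofReal (8 * C * r) :=
          ENNReal.tsum_mul_right
      _ = 2 * ENNReal.ofReal (8 * C * r) := by
          rw [ENNReal.tsum_geometric, show (1/2 : ℝ) = 2⁻¹ by norm_num,
            ENNReal.ofReal_inv_of_pos two_pos, ENNReal.ofReal_ofNat,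
            ENNReal.one_sub_inv_two, inv_inv]
      _ ≤ ENNReal.ofReal (16 * C * r) := by
          rcases le_or_gt C 0 with hC | hC
          · have h1 : 8 * C * r ≤ 0 := by nlinarith
            simp [ENNReal.ofReal_eq_zero.mpr h1]
          · rw [show (2 : ℝ≥0∞) = ENNReal.ofReal 2 by simp, ← ENNReal.ofReal_mul (by norm_num)]
            exact ENNReal.ofReal_le_ofReal (by nlinarith)
end

section
/- Let Γ ⊆ ℂ \ {0} be Carleson with constant C. Then the image Γ' = {1/z : z ∈ Γ} under the inversion z ↦ 1/z satisfies μ(Γ' ∩ D(0,r)) ≤ 4·C·r for every r > 0. -/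
open MeasureTheory Metric

/-- If `Γ ⊆ ℂ \ {0}` is Carleson with constant `C`, then its image
under inversion `z ↦ 1/z` satisfies `μ(Γ' ∩ D(0,r)) ≤ 4·C·r` for every `r > 0`. -/
theorem statement2 (Γ : Set ℂ) (hΓ : (0 : ℂ) ∉ Γ) (C : ℝ)
    (hCar : ∀ (z : ℂ) (r : ℝ), 0 < r →
      μH[1] (Γ ∩ ball z r) ≤ ENNReal.ofReal (C * r)) :
    ∀ r : ℝ, 0 < r →
      μH[1] ((fun z : ℂ => z⁻¹) '' Γ ∩ ball 0 r) ≤ ENNReal.ofReal (4 * C * r) := by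
  intro r hr
  set A : ℕ → Set ℂ :=
    fun k => {z | r⁻¹ * 2 ^ k ≤ ‖z‖ ∧ ‖z‖ < r⁻¹ * 2 ^ (k + 1)} with hA
  -- Step 1: covering by annuli
  have hcover : (fun z : ℂ => z⁻¹) '' Γ ∩ ball 0 r ⊆
      ⋃ k, (fun z : ℂ => z⁻¹) '' (Γ ∩ A k) := by
    rintro w ⟨⟨z, hz, rfl⟩, hw⟩
    have hz0 : z ≠ 0 := fun h => hΓ (h ▸ hz)
    have hzn : 0 < ‖z‖ := norm_pos_iff.2 hz0
    have hwlt : ‖z‖⁻¹ < r := by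
      simpa [mem_ball, dist_eq_norm, norm_inv] using hw
    have h1 : (1 : ℝ) ≤ ‖z‖ * r := by
      have h := mul_lt_mul_of_pos_left hwlt hzn
      rw [mul_inv_cancel₀ hzn.ne'] at h
      linarith
    obtain ⟨k, hk1, hk2⟩ := exists_nat_pow_near h1 (by norm_num : (1:ℝ) < 2)
    refine Set.mem_iUnion.2 ⟨k, ⟨z, ⟨hz, ?_, ?_⟩, rfl⟩⟩
    · rw [inv_mul_le_iff₀ hr, mul_comm]; exact hk1
    · rw [lt_inv_mul_iff₀ hr]; linarith [hk2]
  -- Step 2: each piece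
  have hterm : ∀ k : ℕ, μH[1] ((fun z : ℂ => z⁻¹) '' (Γ ∩ A k)) ≤
      ENNReal.ofReal ((2⁻¹ : ℝ) ^ k * (2 * C * r)) := by
    intro k
    have hpow : (0:ℝ) < 2 ^ k := by positivity
    have hlow : (0:ℝ) < r⁻¹ * 2 ^ k := by positivity
    set K : NNReal := ((r / 2 ^ k) ^ 2).toNNReal with hK
    have hlip : LipschitzOnWith K (fun z : ℂ => z⁻¹) (Γ ∩ A k) := by
      apply LipschitzOnWith.of_dist_le_mul
      rintro x ⟨-, hx1, -⟩ y ⟨-, hy1, -⟩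
      have hxn : 0 < ‖x‖ := lt_of_lt_of_le hlow hx1
      have hyn : 0 < ‖y‖ := lt_of_lt_of_le hlow hy1
      have hx0 : x ≠ 0 := norm_pos_iff.1 hxn
      have hy0 : y ≠ 0 := norm_pos_iff.1 hyn
      have hid : x⁻¹ - y⁻¹ = (y - x) / (x * y) := by
        field_simp
      have hKv : (K : ℝ) = (r / 2 ^ k) ^ 2 := by
        rw [hK, Real.coe_toNNReal _ (sq_nonneg _)]
      rw [dist_eq_norm, dist_eq_norm, hid, norm_div, norm_mul, hKv]
      have hrx : (0:ℝ) < r / 2 ^ k := by positivity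
      have h1 : (r / 2 ^ k)⁻¹ ≤ ‖x‖ := by
        rw [inv_div, div_eq_mul_inv, mul_comm]; exact hx1
      have h2 : (r / 2 ^ k)⁻¹ ≤ ‖y‖ := by
        rw [inv_div, div_eq_mul_inv, mul_comm]; exact hy1
      have hxy : (r / 2 ^ k)⁻¹ * (r / 2 ^ k)⁻¹ ≤ ‖x‖ * ‖y‖ :=
        mul_le_mul h1 h2 (le_of_lt (by positivity)) (le_of_lt hxn)
      have hyx : ‖y - x‖ = ‖x - y‖ := norm_sub_rev _ _
      rw [hyx, div_le_iff₀ (by positivity)]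
      calc ‖x - y‖
          = (r / 2 ^ k) ^ 2 * ‖x - y‖ * ((r / 2 ^ k)⁻¹ * (r / 2 ^ k)⁻¹) := by
            field_simp
        _ ≤ (r / 2 ^ k) ^ 2 * ‖x - y‖ * (‖x‖ * ‖y‖) :=
            mul_le_mul_of_nonneg_left hxy (by positivity)
    have h1 := hlip.hausdorffMeasure_image_le (le_of_lt one_pos)
    have h2 : μH[1] (Γ ∩ A k) ≤ ENNReal.ofReal (C * (r⁻¹ * 2 ^ (k + 1))) := by
      refine le_trans (measure_mono ?_) (hCar 0 (r⁻¹ * 2 ^ (k + 1)) (by positivity))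
      rintro z ⟨hz1, -, hz2⟩
      exact ⟨hz1, by simpa [mem_ball, dist_eq_norm] using hz2⟩
    calc μH[1] ((fun z : ℂ => z⁻¹) '' (Γ ∩ A k)) ≤ (K : ENNReal) ^ (1:ℝ) * μH[1] (Γ ∩ A k) := h1
      _ ≤ (K : ENNReal) * ENNReal.ofReal (C * (r⁻¹ * 2 ^ (k + 1))) := by
          rw [ENNReal.rpow_one]; exact mul_le_mul_right h2 _
      _ = ENNReal.ofReal ((r / 2 ^ k) ^ 2 * (C * (r⁻¹ * 2 ^ (k + 1)))) := by
          rw [ENNReal.ofReal_mul (sq_nonneg _), hK]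
          rfl
      _ = ENNReal.ofReal ((2⁻¹ : ℝ) ^ k * (2 * C * r)) := by
          congr 1
          field_simp
          rw [one_div, inv_pow, show ((2:ℝ) ^ k) ^ 2 * C * 2 * ((2:ℝ) ^ k)⁻¹ = C * 2 ^ k * 2 * (2 ^ k * (2 ^ k)⁻¹) by ring, mul_inv_cancel₀ hpow.ne', pow_succ]
          ring
  -- Step 3: summation
  calc μH[1] ((fun z : ℂ => z⁻¹) '' Γ ∩ ball 0 r)
      ≤ μH[1] (⋃ k, (fun z : ℂ => z⁻¹) '' (Γ ∩ A k)) := measure_mono hcover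
    _ ≤ ∑' k, μH[1] ((fun z : ℂ => z⁻¹) '' (Γ ∩ A k)) := measure_iUnion_le _
    _ ≤ ∑' k, ENNReal.ofReal ((2⁻¹ : ℝ) ^ k * (2 * C * r)) := ENNReal.tsum_le_tsum hterm
    _ = ∑' k : ℕ, (ENNReal.ofReal (2⁻¹ : ℝ)) ^ k * ENNReal.ofReal (2 * C * r) := by
        congr 1; funext k
        rw [ENNReal.ofReal_mul (by positivity), ENNReal.ofReal_pow (by norm_num)]
    _ = (∑' k : ℕ, (ENNReal.ofReal (2⁻¹ : ℝ)) ^ k) * ENNReal.ofReal (2 * C * r) :=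
        ENNReal.tsum_mul_right
    _ = 2 * ENNReal.ofReal (2 * C * r) := by
        rw [ENNReal.tsum_geometric]
        congr 1
        rw [show ENNReal.ofReal (2⁻¹ : ℝ) = (2 : ENNReal)⁻¹ by
          rw [ENNReal.ofReal_inv_of_pos (by norm_num)]; norm_num]
        rw [ENNReal.one_sub_inv_two, inv_inv]
    _ = ENNReal.ofReal (4 * C * r) := by
        rw [show (2 : ENNReal) = ENNReal.ofReal 2 by norm_num,
          ← ENNReal.ofReal_mul (by norm_num)]
        congr 1; ring
end

section
/- Let Γ ⊆ ℂ be Carleson with constant C and let α > 0. Then there exists a constant K > 0, depending only on C and α, such that for all z, z₀ ∈ ℂ and all r > |z − z₀|/2, one has ∫_{Γ ∩ D(z,r)} |z' − z₀|^α dμ(z') ≤ K · r^{1+α}. -/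
open MeasureTheory Metric

/-- If `Γ` is Carleson with constant `C` and `α > 0`, there is a
constant `K > 0` depending only on `C` and `α` such that for all `z, z₀` and
`r > |z - z₀|/2`, `∫_{Γ ∩ D(z,r)} |z' - z₀|^α dμ(z') ≤ K·r^{1+α}`. -/
theorem statement7 (C α : ℝ) (hC : 0 < C) (hα : 0 < α) :
    ∃ K : ℝ, 0 < K ∧ ∀ Γ : Set ℂ,
      (∀ (z : ℂ) (r : ℝ), 0 < r → μH[1] (Γ ∩ ball z r) ≤ ENNReal.ofReal (C * r)) →
      ∀ z z₀ : ℂ, ∀ r : ℝ, ‖z - z₀‖ / 2 < r →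
        ∫⁻ z' in Γ ∩ ball z r,
            ENNReal.ofReal (‖z' - z₀‖ ^ α) ∂(μH[1] : Measure ℂ)
          ≤ ENNReal.ofReal (K * r ^ (1 + α)) := by
  refine ⟨C * 3 ^ α, by positivity, ?_⟩
  intro Γ hΓ z z₀ r hr
  have hr0 : 0 < r := lt_of_le_of_lt (by positivity) hr
  have hzz : ‖z - z₀‖ < 2 * r := by linarith
  set μ : Measure ℂ := μH[1]
  have hball : ∀ᵐ x ∂ μ.restrict (Γ ∩ ball z r), x ∈ ball z r := by
    have h1 : ∀ᵐ x ∂ μ.restrict (ball z r), x ∈ ball z r :=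
      ae_restrict_mem measurableSet_ball
    exact ae_mono (Measure.restrict_mono Set.inter_subset_right le_rfl) h1
  have hbound : ∀ᵐ x ∂ μ.restrict (Γ ∩ ball z r),
      ENNReal.ofReal (‖x - z₀‖ ^ α) ≤ ENNReal.ofReal ((3 * r) ^ α) := by
    filter_upwards [hball] with x hx
    apply ENNReal.ofReal_le_ofReal
    apply Real.rpow_le_rpow (by positivity) _ hα.le
    have h1 : ‖x - z‖ < r := by simpa [Complex.dist_eq] using hx
    calc ‖x - z₀‖ ≤ ‖x - z‖ + ‖z - z₀‖ := by
          simpa using norm_add_le (x - z) (z - z₀)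
      _ ≤ r + 2 * r := by linarith
      _ = 3 * r := by ring
  calc ∫⁻ z' in Γ ∩ ball z r, ENNReal.ofReal (‖z' - z₀‖ ^ α) ∂μ
      ≤ ∫⁻ _ in Γ ∩ ball z r, ENNReal.ofReal ((3 * r) ^ α) ∂μ :=
        lintegral_mono_ae hbound
    _ = ENNReal.ofReal ((3 * r) ^ α) * μ (Γ ∩ ball z r) := setLIntegral_const _ _
    _ ≤ ENNReal.ofReal ((3 * r) ^ α) * ENNReal.ofReal (C * r) := by
        exact mul_le_mul_right (hΓ z r hr0) _
    _ = ENNReal.ofReal ((3 * r) ^ α * (C * r)) := by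
        rw [← ENNReal.ofReal_mul (by positivity)]
    _ = ENNReal.ofReal (C * 3 ^ α * r ^ (1 + α)) := by
        congr 1
        rw [Real.mul_rpow (by norm_num) hr0.le, Real.rpow_add hr0, Real.rpow_one]
        ring
end

section
/- Let Γ ⊆ ℂ be Carleson with constant C and let 0 < α < 1. Then there exists a constant K > 0, depending only on C and α, such that for all z, z₀ ∈ ℂ and all r > |z − z₀|/2, one has ∫_{Γ ∩ D(z,r)} |z' − z₀|^{−α} dμ(z') ≤ K · r^{1−α}. -/
open MeasureTheory Metric

/-- If `Γ` is Carleson with constant `C` and `0 < α < 1`, there is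
a constant `K > 0` depending only on `C` and `α` such that for all `z, z₀` and
`r > |z - z₀|/2`, `∫_{Γ ∩ D(z,r)} |z' - z₀|^{-α} dμ(z') ≤ K·r^{1-α}`. -/
theorem statement8 (C α : ℝ) (hC : 0 < C) (hα₀ : 0 < α) (hα₁ : α < 1) :
    ∃ K : ℝ, 0 < K ∧ ∀ Γ : Set ℂ,
      (∀ (z : ℂ) (r : ℝ), 0 < r → μH[1] (Γ ∩ ball z r) ≤ ENNReal.ofReal (C * r)) →
      ∀ z z₀ : ℂ, ∀ r : ℝ, ‖z - z₀‖ / 2 < r →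
        ∫⁻ z' in Γ ∩ ball z r,
            ENNReal.ofReal (‖z' - z₀‖ ^ (-α)) ∂(μH[1] : Measure ℂ)
          ≤ ENNReal.ofReal (K * r ^ (1 - α)) := by
  set q : ℝ := (2:ℝ) ^ (α - 1) with hqdef
  have hq0 : 0 < q := Real.rpow_pos_of_pos two_pos _
  have hq1 : q < 1 := Real.rpow_lt_one_of_one_lt_of_neg one_lt_two (by linarith)
  have h3 : (0:ℝ) < 3 ^ (1 - α) := Real.rpow_pos_of_pos (by norm_num) _
  have h2α : (0:ℝ) < 2 ^ α := Real.rpow_pos_of_pos two_pos _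
  refine ⟨C * 3 ^ (1 - α) * 2 ^ α / (1 - q), div_pos (by positivity) (by linarith), ?_⟩
  intro Γ hΓ z z₀ r hr
  have hr0 : 0 < r := lt_of_le_of_lt (by positivity) hr
  set b : ℝ := 3 * r with hbdef
  have hb : 0 < b := by positivity
  set μ : Measure ℂ := μH[1] with hμdef
  set ν : Measure ℂ := μ.restrict Γ with hνdef
  set f : ℂ → ENNReal := fun z' => ENNReal.ofReal (‖z' - z₀‖ ^ (-α)) with hfdef
  set A : ℕ → Set ℂ := fun n => ball z₀ (b / 2 ^ n) \ ball z₀ (b / 2 ^ (n + 1)) with hAdef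
  -- restriction rewriting
  have hres : μ.restrict (Γ ∩ ball z r) = ν.restrict (ball z r) := by
    rw [hνdef, Measure.restrict_restrict measurableSet_ball, Set.inter_comm]
  -- covering
  have hcover : ball z r ⊆ {z₀} ∪ ⋃ n, A n := by
    intro x hx
    rcases eq_or_ne x z₀ with h | h
    · exact Or.inl h
    · right
      have hd0 : 0 < dist x z₀ := dist_pos.2 h
      have hdb : dist x z₀ < b := by
        have h1 : dist x z < r := mem_ball.1 hx
        have h2 : dist z z₀ < 2 * r := by
          rw [Complex.dist_eq]; linarith
        calc dist x z₀ ≤ dist x z + dist z z₀ := dist_triangle _ _ _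
          _ < b := by rw [hbdef]; linarith
      have hex : ∃ n : ℕ, b / 2 ^ (n + 1) ≤ dist x z₀ := by
        obtain ⟨m, hm⟩ := pow_unbounded_of_one_lt (b / dist x z₀) (one_lt_two (α := ℝ))
        refine ⟨m, ?_⟩
        rw [div_le_iff₀ (by positivity)]
        rw [div_lt_iff₀ hd0] at hm
        have : (2:ℝ) ^ m ≤ 2 ^ (m + 1) := by
          apply pow_le_pow_right₀ one_le_two; omega
        nlinarith
      classical
      let n := Nat.find hex
      refine Set.mem_iUnion.2 ⟨n, ?_, ?_⟩
      · rw [mem_ball]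
        rcases Nat.eq_zero_or_pos n with h0 | h0
        · rw [h0]; simpa using hdb
        · have := Nat.find_min hex (m := n - 1) (by omega)
          push_neg at this
          have hn : n - 1 + 1 = n := by omega
          rwa [hn] at this
      · rw [mem_ball]
        push_neg
        exact Nat.find_spec hex
  -- measure bound on A n
  have hνA : ∀ n, ν (A n) ≤ ENNReal.ofReal (C * (b / 2 ^ n)) := by
    intro n
    calc ν (A n) ≤ ν (ball z₀ (b / 2 ^ n)) := measure_mono Set.diff_subset
      _ = μ (Γ ∩ ball z₀ (b / 2 ^ n)) := by
          rw [hνdef, Measure.restrict_apply measurableSet_ball, Set.inter_comm]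
      _ ≤ ENNReal.ofReal (C * (b / 2 ^ n)) := hΓ _ _ (by positivity)
  -- integral bound on A n
  have hIA : ∀ n, ∫⁻ x in A n, f x ∂ν ≤
      ENNReal.ofReal ((b / 2 ^ (n + 1)) ^ (-α) * (C * (b / 2 ^ n))) := by
    intro n
    have hmeas : MeasurableSet (A n) := measurableSet_ball.diff measurableSet_ball
    calc ∫⁻ x in A n, f x ∂ν
        ≤ ∫⁻ _x in A n, ENNReal.ofReal ((b / 2 ^ (n + 1)) ^ (-α)) ∂ν := by
          apply setLIntegral_mono' hmeas
          intro x hx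
          apply ENNReal.ofReal_le_ofReal
          apply Real.rpow_le_rpow_of_nonpos (by positivity) _ (by linarith)
          have := hx.2
          rw [mem_ball, not_lt, Complex.dist_eq] at this
          exact this
      _ = ENNReal.ofReal ((b / 2 ^ (n + 1)) ^ (-α)) * ν (A n) := setLIntegral_const _ _
      _ ≤ ENNReal.ofReal ((b / 2 ^ (n + 1)) ^ (-α)) * ENNReal.ofReal (C * (b / 2 ^ n)) := by
          exact mul_le_mul_right (hνA n) _
      _ = ENNReal.ofReal ((b / 2 ^ (n + 1)) ^ (-α) * (C * (b / 2 ^ n))) := by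
          rw [← ENNReal.ofReal_mul (by positivity)]
  -- the geometric term
  set t : ℕ → ℝ := fun n => (b / 2 ^ (n + 1)) ^ (-α) * (C * (b / 2 ^ n)) with htdef
  have halfpow : ∀ x : ℝ, 0 < x → (x / 2) ^ (-α) = x ^ (-α) * 2 ^ α := by
    intro x hx
    rw [Real.div_rpow hx.le (by norm_num), Real.rpow_neg (by norm_num : (0:ℝ) ≤ 2)]
    field_simp
  have ht : ∀ n, t n = (C * b ^ (1 - α) * 2 ^ α) * q ^ n := by
    intro n
    induction n with
    | zero =>
      simp only [htdef]
      norm_num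
      rw [halfpow b hb]
      have hb1 : b ^ (1 - α) = b * b ^ (-α) := by
        rw [show (1 - α) = 1 + (-α) by ring, Real.rpow_add hb, Real.rpow_one]
      rw [hb1]; ring
    | succ n ih =>
      have e1 : b / 2 ^ (n + 2) = (b / 2 ^ (n + 1)) / 2 := by
        rw [pow_succ]; ring
      have e2 : b / 2 ^ (n + 1) = (b / 2 ^ n) / 2 := by
        rw [pow_succ]; ring
      have : t (n + 1) = t n * (2 ^ α / 2) := by
        simp only [htdef]
        rw [e1, halfpow _ (by positivity), e2]
        ring
      rw [this, ih]
      have hq2 : q = 2 ^ α / 2 := by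
        rw [hqdef, Real.rpow_sub two_pos, Real.rpow_one]
      rw [pow_succ, hq2]; ring
  have hsummable : Summable t := by
    have : Summable (fun n : ℕ => (C * b ^ (1 - α) * 2 ^ α) * q ^ n) :=
      (summable_geometric_of_lt_one hq0.le hq1).mul_left _
    exact this.congr fun n => (ht n).symm
  have htsum : ∑' n, t n = (C * b ^ (1 - α) * 2 ^ α) * (1 - q)⁻¹ := by
    calc ∑' n, t n = ∑' n, (C * b ^ (1 - α) * 2 ^ α) * q ^ n := tsum_congr ht
      _ = (C * b ^ (1 - α) * 2 ^ α) * ∑' n, q ^ n := tsum_mul_left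
      _ = (C * b ^ (1 - α) * 2 ^ α) * (1 - q)⁻¹ := by
          rw [tsum_geometric_of_lt_one hq0.le hq1]
  -- final computation of the constant
  have hfinal : (C * b ^ (1 - α) * 2 ^ α) * (1 - q)⁻¹
      = C * 3 ^ (1 - α) * 2 ^ α / (1 - q) * r ^ (1 - α) := by
    have : b ^ (1 - α) = 3 ^ (1 - α) * r ^ (1 - α) := by
      rw [hbdef, Real.mul_rpow (by norm_num) hr0.le]
    rw [this]; field_simp
  -- main chain
  calc ∫⁻ z' in Γ ∩ ball z r, f z' ∂μ
      = ∫⁻ z' in ball z r, f z' ∂ν := by rw [hres]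
    _ ≤ ∫⁻ z' in {z₀} ∪ ⋃ n, A n, f z' ∂ν := lintegral_mono_set hcover
    _ ≤ (∫⁻ z' in {z₀}, f z' ∂ν) + ∫⁻ z' in ⋃ n, A n, f z' ∂ν := lintegral_union_le _ _ _
    _ = ∫⁻ z' in ⋃ n, A n, f z' ∂ν := by
        have : ∫⁻ z' in {z₀}, f z' ∂ν = 0 := by
          rw [lintegral_singleton]
          have : f z₀ = 0 := by
            simp only [hfdef, sub_self, norm_zero]
            rw [Real.zero_rpow (by linarith), ENNReal.ofReal_zero]
          rw [this, zero_mul]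
        rw [this, zero_add]
    _ ≤ ∑' n, ∫⁻ z' in A n, f z' ∂ν := lintegral_iUnion_le _ _
    _ ≤ ∑' n, ENNReal.ofReal (t n) := ENNReal.tsum_le_tsum hIA
    _ = ENNReal.ofReal (∑' n, t n) :=
        (ENNReal.ofReal_tsum_of_nonneg (fun n => by positivity) hsummable).symm
    _ = ENNReal.ofReal (C * 3 ^ (1 - α) * 2 ^ α / (1 - q) * r ^ (1 - α)) := by
        rw [htsum, hfinal]
end

section
/- Let 1 < p < ∞ and define q by 1/p + 1/q = 1. Let Γ ⊆ ℂ be Carleson with constant C and let z₀ ∈ ℂ \ Γ. Then the weight w(z) = |z − z₀|^{1 − 2/p} satisfies the Muckenhoupt A_p condition on Γ: there exists A < ∞ such that for all z ∈ Γ and all r > 0, ( (1/r) ∫_{Γ ∩ D(z,r)} |z' − z₀|^{p−2} dμ(z') )^{1/p} · ( (1/r) ∫_{Γ ∩ D(z,r)} |z' − z₀|^{q−2} dμ(z') )^{1/q} ≤ A. -/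
open MeasureTheory Metric
open scoped ENNReal NNReal

private lemma rpow_sandwich (s a t : ℝ) (ha : 0 < a) (h1 : a / 2 ≤ t) (h2 : t ≤ 2 * a) :
    t ^ s ≤ max ((2:ℝ) ^ s) ((1/2:ℝ) ^ s) * a ^ s := by
  have ht0 : 0 ≤ t := le_trans (by linarith) h1
  have has : 0 ≤ a ^ s := Real.rpow_nonneg ha.le s
  rcases le_or_gt 0 s with hs | hs
  · calc t ^ s ≤ (2 * a) ^ s := Real.rpow_le_rpow ht0 h2 hs
      _ = 2 ^ s * a ^ s := Real.mul_rpow (by norm_num) ha.le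
      _ ≤ _ := mul_le_mul_of_nonneg_right (le_max_left _ _) has
  · calc t ^ s ≤ (a / 2) ^ s := Real.rpow_le_rpow_of_nonpos (by linarith) h1 hs.le
      _ = ((1/2) * a) ^ s := by congr 1; ring
      _ = (1/2) ^ s * a ^ s := Real.mul_rpow (by norm_num) ha.le
      _ ≤ _ := mul_le_mul_of_nonneg_right (le_max_right _ _) has

private lemma inv_mul_le_of_le (r B : ℝ) (hr : 0 < r) {I : ℝ≥0∞}
    (hI : I ≤ ENNReal.ofReal (B * r)) :
    (ENNReal.ofReal r)⁻¹ * I ≤ ENNReal.ofReal B := by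
  have hr0 : ENNReal.ofReal r ≠ 0 := ne_of_gt (ENNReal.ofReal_pos.mpr hr)
  calc (ENNReal.ofReal r)⁻¹ * I
      ≤ (ENNReal.ofReal r)⁻¹ * (ENNReal.ofReal B * ENNReal.ofReal r) := by
        rw [← ENNReal.ofReal_mul' hr.le]
        exact mul_le_mul_right hI _
    _ = ENNReal.ofReal B := by
        rw [mul_comm (ENNReal.ofReal B), ← mul_assoc,
          ENNReal.inv_mul_cancel hr0 ENNReal.ofReal_ne_top, one_mul]

private lemma prod_rpow_le (p q ρ cp cq : ℝ) (hp : 0 < p) (hq : 0 < q) (hρ : 0 < ρ)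
    (hsum : (p - 2) * (1/p) + (q - 2) * (1/q) = 0) (hcp : 0 ≤ cp) (hcq : 0 ≤ cq)
    {Ip Iq : ℝ≥0∞} (hIp : Ip ≤ ENNReal.ofReal (cp * ρ ^ (p-2)))
    (hIq : Iq ≤ ENNReal.ofReal (cq * ρ ^ (q-2))) :
    Ip ^ (1/p) * Iq ^ (1/q) ≤ ENNReal.ofReal (cp ^ (1/p) * cq ^ (1/q)) := by
  have hρs : ∀ t : ℝ, (0:ℝ) ≤ ρ ^ t := fun t => Real.rpow_nonneg hρ.le t
  have h1 : Ip ^ (1/p) ≤ ENNReal.ofReal ((cp * ρ ^ (p-2)) ^ (1/p)) := by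
    rw [← ENNReal.ofReal_rpow_of_nonneg (mul_nonneg hcp (hρs _)) (by positivity)]
    exact ENNReal.rpow_le_rpow hIp (by positivity)
  have h2 : Iq ^ (1/q) ≤ ENNReal.ofReal ((cq * ρ ^ (q-2)) ^ (1/q)) := by
    rw [← ENNReal.ofReal_rpow_of_nonneg (mul_nonneg hcq (hρs _)) (by positivity)]
    exact ENNReal.rpow_le_rpow hIq (by positivity)
  calc Ip ^ (1/p) * Iq ^ (1/q)
      ≤ ENNReal.ofReal ((cp * ρ ^ (p-2)) ^ (1/p)) * ENNReal.ofReal ((cq * ρ ^ (q-2)) ^ (1/q)) :=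
        mul_le_mul' h1 h2
    _ = ENNReal.ofReal ((cp * ρ ^ (p-2)) ^ (1/p) * (cq * ρ ^ (q-2)) ^ (1/q)) :=
        (ENNReal.ofReal_mul (Real.rpow_nonneg (mul_nonneg hcp (hρs _)) _)).symm
    _ = ENNReal.ofReal (cp ^ (1/p) * cq ^ (1/q)) := by
        congr 1
        rw [Real.mul_rpow hcp (hρs _), Real.mul_rpow hcq (hρs _),
          ← Real.rpow_mul hρ.le, ← Real.rpow_mul hρ.le]
        calc cp ^ (1/p) * ρ ^ ((p-2)*(1/p)) * (cq ^ (1/q) * ρ ^ ((q-2)*(1/q)))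
            = cp ^ (1/p) * cq ^ (1/q) * ρ ^ ((p-2)*(1/p) + (q-2)*(1/q)) := by
              rw [Real.rpow_add hρ]; ring
          _ = cp ^ (1/p) * cq ^ (1/q) := by rw [hsum, Real.rpow_zero, mul_one]

private lemma annuli_bound (ν : Measure ℂ) (z₀ : ℂ) (C s : ℝ) (hC : 0 < C) (hs : -1 < s)
    (hball : ∀ ρ : ℝ, 0 < ρ → ν (ball z₀ ρ) ≤ ENNReal.ofReal (C * ρ))
    (h0 : ν {z₀} = 0) :
    ∃ K : ℝ, 0 < K ∧ ∀ r : ℝ, 0 < r →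
      ∫⁻ z' in ball z₀ r, ENNReal.ofReal (dist z' z₀ ^ s) ∂ν
        ≤ ENNReal.ofReal (K * (r ^ s * r)) := by
  set M : ℝ := max ((2:ℝ) ^ s) ((1/2:ℝ) ^ s) with hM
  have hM0 : 0 < M := lt_max_of_lt_left (Real.rpow_pos_of_pos two_pos s)
  set θ : ℝ := (1/2:ℝ) ^ s * (1/2) with hθ
  have hθ0 : 0 < θ :=
    mul_pos (Real.rpow_pos_of_pos (by norm_num) s) (by norm_num)
  have hθ1 : θ < 1 := by
    have he : θ = (1/2:ℝ) ^ (s + 1) := by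
      rw [hθ, Real.rpow_add (by norm_num), Real.rpow_one]
    rw [he]
    exact Real.rpow_lt_one (by norm_num) (by norm_num) (by linarith)
  refine ⟨2 * C * M * (1 - θ)⁻¹,
    mul_pos (mul_pos (mul_pos two_pos hC) hM0) (inv_pos.mpr (by linarith)), fun r hr => ?_⟩
  set S : ℕ → Set ℂ := fun k => closedBall z₀ (r * (1/2)^k) \ ball z₀ (r * (1/2)^(k+1)) with hS
  have hcover : ball z₀ r ⊆ {z₀} ∪ ⋃ k, S k := by
    intro z' hz'
    rcases eq_or_ne z' z₀ with h | h
    · exact Or.inl (by simp [h])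
    · right
      have ht : 0 < dist z' z₀ := dist_pos.mpr h
      have hex : ∃ n : ℕ, r * (1/2:ℝ)^(n+1) < dist z' z₀ := by
        obtain ⟨n, hn⟩ := exists_pow_lt_of_lt_one (div_pos ht hr) (by norm_num : (1/2:ℝ) < 1)
        have h2 : (1/2:ℝ)^(n+1) ≤ (1/2:ℝ)^n :=
          pow_le_pow_of_le_one (by norm_num) (by norm_num) (Nat.le_succ n)
        have h3 : (1/2:ℝ)^n * r < dist z' z₀ := (lt_div_iff₀ hr).mp hn
        exact ⟨n, by nlinarith⟩
      set k := Nat.find hex with hk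
      have hk1 : r * (1/2:ℝ)^(k+1) < dist z' z₀ := Nat.find_spec hex
      have hk2 : dist z' z₀ ≤ r * (1/2:ℝ)^k := by
        rcases Nat.eq_zero_or_pos k with h0' | h0'
        · rw [h0']
          simpa using (mem_ball.mp hz').le
        · obtain ⟨m, hm⟩ := Nat.exists_eq_succ_of_ne_zero h0'.ne'
          have hmin : ¬ (r * (1/2:ℝ)^(m+1) < dist z' z₀) :=
            Nat.find_min hex (by omega)
          rw [hm]
          exact le_of_not_gt hmin
      exact Set.mem_iUnion.mpr ⟨k, mem_closedBall.mpr hk2, fun hmem => absurd (mem_ball.mp hmem) (not_lt.mpr hk1.le)⟩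
  have term_bound : ∀ k : ℕ,
      ∫⁻ z' in S k, ENNReal.ofReal (dist z' z₀ ^ s) ∂ν
        ≤ ENNReal.ofReal ((2 * C * M * (r ^ s * r)) * θ ^ k) := by
    intro k
    have hRk : 0 < r * (1/2:ℝ)^k := by positivity
    have hmeas : MeasurableSet (S k) := measurableSet_closedBall.diff measurableSet_ball
    have hsub : S k ⊆ ball z₀ (2 * (r * (1/2:ℝ)^k)) := by
      intro x hx
      have := mem_closedBall.mp hx.1
      rw [mem_ball]
      linarith
    calc ∫⁻ z' in S k, ENNReal.ofReal (dist z' z₀ ^ s) ∂ν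
        ≤ ∫⁻ _ in S k, ENNReal.ofReal (M * (r * (1/2:ℝ)^k) ^ s) ∂ν := by
          apply setLIntegral_mono' hmeas
          intro x hx
          apply ENNReal.ofReal_le_ofReal
          apply rpow_sandwich s _ _ hRk
          · have hnb := hx.2
            rw [mem_ball, not_lt] at hnb
            have : r * (1/2:ℝ)^(k+1) = r * (1/2:ℝ)^k / 2 := by rw [pow_succ]; ring
            linarith [this ▸ hnb]
          · have := mem_closedBall.mp hx.1
            linarith
      _ = ENNReal.ofReal (M * (r * (1/2:ℝ)^k) ^ s) * ν (S k) := setLIntegral_const _ _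
      _ ≤ ENNReal.ofReal (M * (r * (1/2:ℝ)^k) ^ s) * ENNReal.ofReal (C * (2 * (r * (1/2:ℝ)^k))) :=
          mul_le_mul_right (le_trans (measure_mono hsub) (hball _ (by positivity))) _
      _ = ENNReal.ofReal ((M * (r * (1/2:ℝ)^k) ^ s) * (C * (2 * (r * (1/2:ℝ)^k)))) :=
          (ENNReal.ofReal_mul (mul_nonneg hM0.le (Real.rpow_nonneg hRk.le _))).symm
      _ = ENNReal.ofReal ((2 * C * M * (r ^ s * r)) * θ ^ k) := by
          congr 1
          have hks : ((1/2:ℝ)^k) ^ s = ((1/2:ℝ)^s)^k := by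
            rw [← Real.rpow_natCast (1/2:ℝ) k, ← Real.rpow_natCast ((1/2:ℝ)^s) k,
              ← Real.rpow_mul (by norm_num), ← Real.rpow_mul (by norm_num), mul_comm]
          rw [Real.mul_rpow hr.le (by positivity), hks, hθ, mul_pow]
          ring
  calc ∫⁻ z' in ball z₀ r, ENNReal.ofReal (dist z' z₀ ^ s) ∂ν
      ≤ ∫⁻ z' in {z₀} ∪ ⋃ k, S k, ENNReal.ofReal (dist z' z₀ ^ s) ∂ν :=
        lintegral_mono_set hcover
    _ ≤ (∫⁻ z' in {z₀}, ENNReal.ofReal (dist z' z₀ ^ s) ∂ν)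
          + ∫⁻ z' in ⋃ k, S k, ENNReal.ofReal (dist z' z₀ ^ s) ∂ν :=
        lintegral_union_le _ _ _
    _ = ∫⁻ z' in ⋃ k, S k, ENNReal.ofReal (dist z' z₀ ^ s) ∂ν := by
        rw [setLIntegral_measure_zero _ _ h0, zero_add]
    _ ≤ ∑' k, ∫⁻ z' in S k, ENNReal.ofReal (dist z' z₀ ^ s) ∂ν := lintegral_iUnion_le _ _
    _ ≤ ∑' k, ENNReal.ofReal ((2 * C * M * (r ^ s * r)) * θ ^ k) :=
        ENNReal.tsum_le_tsum term_bound
    _ = ENNReal.ofReal (2 * C * M * (r ^ s * r)) * ∑' k, (ENNReal.ofReal θ) ^ k := by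
        rw [← ENNReal.tsum_mul_left]
        congr 1
        funext k
        rw [ENNReal.ofReal_mul (by positivity), ENNReal.ofReal_pow hθ0.le]
    _ = ENNReal.ofReal (2 * C * M * (r ^ s * r)) * ENNReal.ofReal ((1 - θ)⁻¹) := by
        rw [ENNReal.tsum_geometric]
        congr 1
        rw [← ENNReal.ofReal_one, ← ENNReal.ofReal_sub _ hθ0.le,
          ← ENNReal.ofReal_inv_of_pos (by linarith)]
    _ = ENNReal.ofReal (2 * C * M * (1 - θ)⁻¹ * (r ^ s * r)) := by
        rw [← ENNReal.ofReal_mul (by positivity)]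
        congr 1
        ring

/-- Let `1 < p < ∞`, `1/p + 1/q = 1`, let `Γ ⊆ ℂ` be Carleson with
constant `C` and `z₀ ∉ Γ`. Then the weight `w(z) = |z - z₀|^{1 - 2/p}` satisfies
the Muckenhoupt `A_p` condition on `Γ`: there exists `A < ∞` such that for all
`z ∈ Γ` and `r > 0`,
`((1/r)∫_{Γ∩D(z,r)} |z'-z₀|^{p-2} dμ)^{1/p} · ((1/r)∫_{Γ∩D(z,r)} |z'-z₀|^{q-2} dμ)^{1/q} ≤ A`. -/
theorem statement9 (p q : ℝ) (hp : 1 < p) (hpq : 1 / p + 1 / q = 1)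
    (Γ : Set ℂ) (C : ℝ) (hC : 0 < C)
    (hCar : ∀ (z : ℂ) (r : ℝ), 0 < r →
      μH[1] (Γ ∩ ball z r) ≤ ENNReal.ofReal (C * r))
    (z₀ : ℂ) (hz₀ : z₀ ∉ Γ) :
    ∃ A : ℝ, ∀ z ∈ Γ, ∀ r : ℝ, 0 < r →
      ((ENNReal.ofReal r)⁻¹ *
          ∫⁻ z' in Γ ∩ ball z r,
            ENNReal.ofReal (‖z' - z₀‖ ^ (p - 2)) ∂(μH[1] : Measure ℂ)) ^ (1 / p) *
        ((ENNReal.ofReal r)⁻¹ *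
          ∫⁻ z' in Γ ∩ ball z r,
            ENNReal.ofReal (‖z' - z₀‖ ^ (q - 2)) ∂(μH[1] : Measure ℂ)) ^ (1 / q)
        ≤ ENNReal.ofReal A := by
  classical
  have hp0 : 0 < p := by linarith
  have hp1 : 1/p < 1 := by rw [div_lt_one hp0]; exact hp
  have hp2 : 0 < 1/p := by positivity
  have hq2 : 0 < 1/q := by linarith
  have hq0 : 0 < q := one_div_pos.mp hq2
  have hq : 1 < q := by
    have h1 : 1/q < 1 := by linarith
    rwa [div_lt_one hq0] at h1
  have hsum : (p - 2) * (1/p) + (q - 2) * (1/q) = 0 := by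
    have e : (p - 2) * (1/p) + (q - 2) * (1/q) = 2 - 2 * (1/p + 1/q) := by
      field_simp
      ring
    rw [e, hpq]
    norm_num
  set ν := (μH[1] : Measure ℂ).restrict Γ with hν
  have hνball : ∀ (w : ℂ) (ρ : ℝ), 0 < ρ → ν (ball w ρ) ≤ ENNReal.ofReal (C * ρ) := by
    intro w ρ hρ
    rw [hν, Measure.restrict_apply measurableSet_ball, Set.inter_comm]
    exact hCar w ρ hρ
  have hν0 : ν {z₀} = 0 := by
    rw [hν, Measure.restrict_apply (measurableSet_singleton _)]
    have he : {z₀} ∩ Γ = ∅ := by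
      ext x
      simp only [Set.mem_inter_iff, Set.mem_singleton_iff, Set.mem_empty_iff_false, iff_false,
        not_and]
      rintro rfl
      exact hz₀
    rw [he]
    simp
  obtain ⟨Kp, hKp, hKpb⟩ := annuli_bound ν z₀ C (p-2) hC (by linarith)
    (fun ρ hρ => hνball z₀ ρ hρ) hν0
  obtain ⟨Kq, hKq, hKqb⟩ := annuli_bound ν z₀ C (q-2) hC (by linarith)
    (fun ρ hρ => hνball z₀ ρ hρ) hν0
  have hMp : (0:ℝ) < max ((2:ℝ)^(p-2)) ((1/2:ℝ)^(p-2)) :=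
    lt_max_of_lt_left (Real.rpow_pos_of_pos two_pos _)
  have hMq : (0:ℝ) < max ((2:ℝ)^(q-2)) ((1/2:ℝ)^(q-2)) :=
    lt_max_of_lt_left (Real.rpow_pos_of_pos two_pos _)
  refine ⟨max ((max ((2:ℝ)^(p-2)) ((1/2:ℝ)^(p-2)) * C) ^ (1/p)
      * (max ((2:ℝ)^(q-2)) ((1/2:ℝ)^(q-2)) * C) ^ (1/q))
      ((Kp * 3^(p-2) * 3) ^ (1/p) * (Kq * 3^(q-2) * 3) ^ (1/q)),
    fun z hz r hr => ?_⟩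
  have hrw : ∀ t : ℝ,
      (∫⁻ z' in Γ ∩ ball z r, ENNReal.ofReal (‖z' - z₀‖ ^ t) ∂(μH[1] : Measure ℂ))
        = ∫⁻ z' in ball z r, ENNReal.ofReal (dist z' z₀ ^ t) ∂ν := by
    intro t
    rw [hν, Measure.restrict_restrict measurableSet_ball, Set.inter_comm (ball z r) Γ]
    simp_rw [Complex.dist_eq]
  rw [hrw (p-2), hrw (q-2)]
  rcases le_or_gt (2*r) (dist z z₀) with hcase | hcase
  · -- far case: ball z r stays away from z₀
    have hd : 0 < dist z z₀ := by linarith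
    have key : ∀ s : ℝ,
        (ENNReal.ofReal r)⁻¹ * ∫⁻ z' in ball z r, ENNReal.ofReal (dist z' z₀ ^ s) ∂ν
          ≤ ENNReal.ofReal ((max ((2:ℝ)^s) ((1/2:ℝ)^s) * C) * dist z z₀ ^ s) := by
      intro s
      have hMs : (0:ℝ) < max ((2:ℝ)^s) ((1/2:ℝ)^s) :=
        lt_max_of_lt_left (Real.rpow_pos_of_pos two_pos _)
      have hds : (0:ℝ) ≤ dist z z₀ ^ s := Real.rpow_nonneg dist_nonneg _
      apply inv_mul_le_of_le r _ hr
      calc ∫⁻ z' in ball z r, ENNReal.ofReal (dist z' z₀ ^ s) ∂ν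
          ≤ ∫⁻ _ in ball z r,
              ENNReal.ofReal (max ((2:ℝ)^s) ((1/2:ℝ)^s) * dist z z₀ ^ s) ∂ν := by
            apply setLIntegral_mono' measurableSet_ball
            intro x hx
            apply ENNReal.ofReal_le_ofReal
            apply rpow_sandwich s (dist z z₀) (dist x z₀) hd
            · have h1 : dist z z₀ ≤ dist z x + dist x z₀ := dist_triangle _ _ _
              have h2 : dist z x < r := by rw [dist_comm]; exact mem_ball.mp hx
              linarith
            · have h1 : dist x z₀ ≤ dist x z + dist z z₀ := dist_triangle _ _ _
              have h2 : dist x z < r := mem_ball.mp hx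
              linarith
        _ = ENNReal.ofReal (max ((2:ℝ)^s) ((1/2:ℝ)^s) * dist z z₀ ^ s) * ν (ball z r) :=
            setLIntegral_const _ _
        _ ≤ ENNReal.ofReal (max ((2:ℝ)^s) ((1/2:ℝ)^s) * dist z z₀ ^ s)
              * ENNReal.ofReal (C * r) := mul_le_mul_right (hνball z r hr) _
        _ = ENNReal.ofReal ((max ((2:ℝ)^s) ((1/2:ℝ)^s) * C * dist z z₀ ^ s) * r) := by
            rw [← ENNReal.ofReal_mul (mul_nonneg hMs.le hds)]
            congr 1
            ring
    have hfin := prod_rpow_le p q (dist z z₀)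
      (max ((2:ℝ)^(p-2)) ((1/2:ℝ)^(p-2)) * C) (max ((2:ℝ)^(q-2)) ((1/2:ℝ)^(q-2)) * C)
      hp0 hq0 hd hsum (mul_nonneg hMp.le hC.le) (mul_nonneg hMq.le hC.le)
      (key (p-2)) (key (q-2))
    exact le_trans hfin (ENNReal.ofReal_le_ofReal (le_max_left _ _))
  · -- near case: ball z r ⊆ ball z₀ (3r)
    have hsub : ball z r ⊆ ball z₀ (3*r) := by
      intro x hx
      have h1 : dist x z₀ ≤ dist x z + dist z z₀ := dist_triangle _ _ _
      have h2 : dist x z < r := mem_ball.mp hx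
      rw [mem_ball]
      linarith
    have key : ∀ s K : ℝ, 0 < K →
        (∀ ρ : ℝ, 0 < ρ → ∫⁻ z' in ball z₀ ρ, ENNReal.ofReal (dist z' z₀ ^ s) ∂ν
            ≤ ENNReal.ofReal (K * (ρ ^ s * ρ))) →
        (ENNReal.ofReal r)⁻¹ * ∫⁻ z' in ball z r, ENNReal.ofReal (dist z' z₀ ^ s) ∂ν
          ≤ ENNReal.ofReal ((K * 3^s * 3) * r ^ s) := by
      intro s K hK hKb
      apply inv_mul_le_of_le r _ hr
      calc ∫⁻ z' in ball z r, ENNReal.ofReal (dist z' z₀ ^ s) ∂ν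
          ≤ ∫⁻ z' in ball z₀ (3*r), ENNReal.ofReal (dist z' z₀ ^ s) ∂ν :=
            lintegral_mono_set hsub
        _ ≤ ENNReal.ofReal (K * ((3*r) ^ s * (3*r))) := hKb (3*r) (by linarith)
        _ = ENNReal.ofReal ((K * 3^s * 3) * r ^ s * r) := by
            congr 1
            rw [Real.mul_rpow (by norm_num) hr.le]
            ring
    have h3p : (0:ℝ) ≤ Kp * 3^(p-2) * 3 :=
      mul_nonneg (mul_nonneg hKp.le (Real.rpow_nonneg (by norm_num) _)) (by norm_num)
    have h3q : (0:ℝ) ≤ Kq * 3^(q-2) * 3 :=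
      mul_nonneg (mul_nonneg hKq.le (Real.rpow_nonneg (by norm_num) _)) (by norm_num)
    have hfin := prod_rpow_le p q r (Kp * 3^(p-2) * 3) (Kq * 3^(q-2) * 3)
      hp0 hq0 hr hsum h3p h3q (key (p-2) Kp hKp hKpb) (key (q-2) Kq hKq hKqb)
    exact le_trans hfin (ENNReal.ofReal_le_ofReal (le_max_right _ _))
end

section
/- Let 1 < p < ∞, let Γ ⊆ ℂ be Carleson with constant C, and let z ∈ ℂ with dist(z, Γ) > 0. Let h : ℂ → ℂ be measurable with ∫_Γ |z' − z|^{p−2} |h(z')|^p dμ(z') < ∞. Then ∫_Γ |h(z')| / |z' − z| dμ(z') < ∞; that is, the Cauchy integral of h over Γ converges absolutely at z. -/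
open MeasureTheory Metric


lemma young_aux {p r t : ℝ} (hp : 1 < p) (hr : 0 < r) (ht : 0 ≤ t) :
    t / r ≤ r ^ (p - 2) * t ^ p + r ^ (-2 : ℝ) := by
  have hpq : p.HolderConjugate (Real.conjExponent p) := Real.HolderConjugate.conjExponent hp
  set q := Real.conjExponent p with hq
  have hp0 : p ≠ 0 := hpq.ne_zero
  have hp1 : p - 1 ≠ 0 := hpq.sub_one_ne_zero
  have ha : 0 ≤ r ^ ((p - 2) / p) * t := mul_nonneg (Real.rpow_nonneg hr.le _) ht
  have hb : 0 ≤ r ^ ((2 - 2 * p) / p) := Real.rpow_nonneg hr.le _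
  have hy := Real.young_inequality_of_nonneg ha hb hpq
  have hxy : (p - 2) / p + (2 - 2 * p) / p = -1 := by field_simp; ring
  have hmul : r ^ ((p - 2) / p) * r ^ ((2 - 2 * p) / p) = r⁻¹ := by
    rw [← Real.rpow_add hr, hxy, Real.rpow_neg_one]
  have hab : (r ^ ((p - 2) / p) * t) * r ^ ((2 - 2 * p) / p) = t / r := by
    calc (r ^ ((p - 2) / p) * t) * r ^ ((2 - 2 * p) / p)
        = (r ^ ((p - 2) / p) * r ^ ((2 - 2 * p) / p)) * t := by ring
      _ = r⁻¹ * t := by rw [hmul]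
      _ = t / r := by rw [div_eq_mul_inv, mul_comm]
  have hap : (r ^ ((p - 2) / p) * t) ^ p = r ^ (p - 2) * t ^ p := by
    rw [Real.mul_rpow (Real.rpow_nonneg hr.le _) ht, ← Real.rpow_mul hr.le,
      div_mul_cancel₀ _ hp0]
  have hbq : (r ^ ((2 - 2 * p) / p)) ^ q = r ^ (-2 : ℝ) := by
    rw [← Real.rpow_mul hr.le]
    congr 1
    rw [Real.HolderConjugate.conjugate_eq hpq]
    field_simp
    ring
  calc t / r = (r ^ ((p - 2) / p) * t) * r ^ ((2 - 2 * p) / p) := hab.symm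
    _ ≤ (r ^ ((p - 2) / p) * t) ^ p / p + (r ^ ((2 - 2 * p) / p)) ^ q / q := hy
    _ ≤ (r ^ ((p - 2) / p) * t) ^ p + (r ^ ((2 - 2 * p) / p)) ^ q :=
        add_le_add (div_le_self (Real.rpow_nonneg ha _) hp.le)
          (div_le_self (Real.rpow_nonneg hb _) hpq.symm.lt.le)
    _ = r ^ (p - 2) * t ^ p + r ^ (-2 : ℝ) := by rw [hap, hbq]


/-- Finiteness of ∫_Γ |z'-z|^{-2} for Carleson Γ with dist(z,Γ) > 0. -/
lemma aux_inv_sq (Γ : Set ℂ) (C : ℝ) (hC : 0 < C)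
    (hCar : ∀ (z : ℂ) (r : ℝ), 0 < r →
      μH[1] (Γ ∩ ball z r) ≤ ENNReal.ofReal (C * r))
    (z : ℂ) (hz : 0 < Metric.infDist z Γ) :
    ∫⁻ z' in Γ, ENNReal.ofReal (‖z' - z‖ ^ (-2 : ℝ))
        ∂(μH[1] : Measure ℂ) < ⊤ := by
  classical
  set d : ℝ := Metric.infDist z Γ with hd
  have hd0 : 0 < d := hz
  set S : ℕ → Set ℂ := fun k => Γ ∩ (ball z (2 ^ (k+1) * d) \ ball z (2 ^ k * d)) with hS
  have hdist : ∀ z' ∈ Γ, d ≤ dist z' z := by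
    intro z' hz'
    rw [dist_comm]
    exact Metric.infDist_le_dist_of_mem hz'
  have hcover : Γ ⊆ ⋃ k : ℕ, S k := by
    intro z' hz'
    have hr : d ≤ dist z' z := hdist z' hz'
    have hex : ∃ n : ℕ, dist z' z < 2 ^ n * d := by
      obtain ⟨n, hn⟩ := pow_unbounded_of_one_lt (dist z' z / d) (one_lt_two (α := ℝ))
      exact ⟨n, by rwa [div_lt_iff₀ hd0] at hn⟩
    set n := Nat.find hex with hn
    have hnspec : dist z' z < 2 ^ n * d := Nat.find_spec hex
    have hn0 : n ≠ 0 := by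
      intro h0
      rw [h0] at hnspec
      simp at hnspec
      exact absurd hnspec (not_lt.2 hr)
    have hklow : ¬ dist z' z < 2 ^ (n - 1) * d := Nat.find_min hex (Nat.sub_lt (Nat.pos_of_ne_zero hn0) one_pos)
    refine Set.mem_iUnion.2 ⟨n - 1, hz', ?_, ?_⟩
    · have : n - 1 + 1 = n := Nat.succ_pred_eq_of_pos (Nat.pos_of_ne_zero hn0)
      rw [Metric.mem_ball, this]
      exact hnspec
    · rw [Metric.mem_ball]
      exact hklow
  calc ∫⁻ z' in Γ, ENNReal.ofReal (‖z' - z‖ ^ (-2 : ℝ)) ∂(μH[1] : Measure ℂ)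
      ≤ ∫⁻ z' in ⋃ k : ℕ, S k, ENNReal.ofReal (‖z' - z‖ ^ (-2 : ℝ))
          ∂(μH[1] : Measure ℂ) := lintegral_mono_set hcover
    _ ≤ ∑' k : ℕ, ∫⁻ z' in S k, ENNReal.ofReal (‖z' - z‖ ^ (-2 : ℝ))
          ∂(μH[1] : Measure ℂ) := lintegral_iUnion_le _ _
    _ ≤ ∑' k : ℕ, ENNReal.ofReal (2 * C / d) * (ENNReal.ofReal (1/2)) ^ k := by
        refine ENNReal.tsum_le_tsum fun k => ?_
        have h2k : (0:ℝ) < 2 ^ k * d := by positivity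
        have h2k1 : (0:ℝ) < 2 ^ (k+1) * d := by positivity
        have hbound : ∀ z' ∈ S k,
            ENNReal.ofReal (‖z' - z‖ ^ (-2 : ℝ))
              ≤ ENNReal.ofReal ((2 ^ k * d) ^ (-2 : ℝ)) := by
          intro z' hz'
          obtain ⟨_, _, hnball⟩ := hz'
          rw [Metric.mem_ball, not_lt] at hnball
          apply ENNReal.ofReal_le_ofReal
          apply Real.rpow_le_rpow_of_nonpos h2k
          · rwa [Complex.dist_eq] at hnball
          · norm_num
        calc ∫⁻ z' in S k, ENNReal.ofReal (‖z' - z‖ ^ (-2 : ℝ))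
              ∂(μH[1] : Measure ℂ)
            ≤ ∫⁻ _ in S k, ENNReal.ofReal ((2 ^ k * d) ^ (-2 : ℝ))
              ∂(μH[1] : Measure ℂ) := setLIntegral_mono measurable_const hbound
          _ = ENNReal.ofReal ((2 ^ k * d) ^ (-2 : ℝ)) * (μH[1] : Measure ℂ) (S k) :=
              setLIntegral_const _ _
          _ ≤ ENNReal.ofReal ((2 ^ k * d) ^ (-2 : ℝ)) * ENNReal.ofReal (C * (2 ^ (k+1) * d)) := by
              gcongr
              refine le_trans (measure_mono ?_) (hCar z (2 ^ (k+1) * d) h2k1)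
              exact Set.inter_subset_inter_right _ Set.diff_subset
          _ = ENNReal.ofReal (2 * C / d) * (ENNReal.ofReal (1/2)) ^ k := by
              rw [← ENNReal.ofReal_pow (by norm_num), ← ENNReal.ofReal_mul (by positivity),
                ← ENNReal.ofReal_mul (by positivity)]
              congr 1
              have hrp : ((2:ℝ) ^ k * d) ^ (-2 : ℝ) = ((2 ^ k * d) ^ 2)⁻¹ := by
                rw [show (-2 : ℝ) = -(2:ℕ) by norm_num, Real.rpow_neg h2k.le, Real.rpow_natCast]
              rw [hrp, one_div_pow]
              have h1 : (2:ℝ)^k ≠ 0 := by positivity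
              have h2 : d ≠ 0 := hd0.ne'
              field_simp
              ring
    _ = ENNReal.ofReal (2 * C / d) * (1 - ENNReal.ofReal (1/2))⁻¹ := by
        rw [ENNReal.tsum_mul_left, ENNReal.tsum_geometric]
    _ < ⊤ := by
        have : ENNReal.ofReal (1/2 : ℝ) = 2⁻¹ := by
          rw [one_div, ← ENNReal.ofReal_ofNat 2, ENNReal.ofReal_inv_of_pos (by norm_num)]
        rw [this, ENNReal.one_sub_inv_two]
        simp [ENNReal.mul_lt_top, ENNReal.ofReal_lt_top]


/-- Let `1 < p < ∞`, let `Γ ⊆ ℂ` be Carleson with constant `C`,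
and `z ∈ ℂ` with `dist(z, Γ) > 0`. If `h` is measurable and
`∫_Γ |z' - z|^{p-2}|h(z')|^p dμ < ∞`, then `∫_Γ |h(z')|/|z' - z| dμ < ∞`,
i.e. the Cauchy integral of `h` over `Γ` converges absolutely at `z`. -/
theorem statement12 (p : ℝ) (hp : 1 < p)
    (Γ : Set ℂ) (C : ℝ) (hC : 0 < C)
    (hCar : ∀ (z : ℂ) (r : ℝ), 0 < r →
      μH[1] (Γ ∩ ball z r) ≤ ENNReal.ofReal (C * r))
    (z : ℂ) (hz : 0 < Metric.infDist z Γ)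
    (h : ℂ → ℂ) (hmeas : Measurable h)
    (hLp : ∫⁻ z' in Γ,
        ENNReal.ofReal (‖z' - z‖ ^ (p - 2) * ‖h z'‖ ^ p)
          ∂(μH[1] : Measure ℂ) < ⊤) :
    ∫⁻ z' in Γ,
        ENNReal.ofReal (‖h z'‖ / ‖z' - z‖)
          ∂(μH[1] : Measure ℂ) < ⊤ := by
  have habs : Measurable fun z' : ℂ => ‖z' - z‖ :=
    (continuous_norm.comp (continuous_id.sub continuous_const)).measurable
  have hg1 : Measurable fun z' : ℂ =>
      ENNReal.ofReal (‖z' - z‖ ^ (p - 2) * ‖h z'‖ ^ p) :=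
    ((habs.pow_const (p - 2)).mul
      ((continuous_norm.measurable.comp hmeas).pow_const p)).ennreal_ofReal
  have hg2 : Measurable fun z' : ℂ =>
      ENNReal.ofReal (‖z' - z‖ ^ (-2 : ℝ)) :=
    (habs.pow_const (-2 : ℝ)).ennreal_ofReal
  have key : ∀ z' ∈ Γ,
      ENNReal.ofReal (‖h z'‖ / ‖z' - z‖) ≤
        ENNReal.ofReal (‖z' - z‖ ^ (p - 2) * ‖h z'‖ ^ p) +
          ENNReal.ofReal (‖z' - z‖ ^ (-2 : ℝ)) := by
    intro z' hz'
    have hr : 0 < ‖z' - z‖ := by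
      have h1 : Metric.infDist z Γ ≤ dist z z' := Metric.infDist_le_dist_of_mem hz'
      have h2 : dist z z' = ‖z' - z‖ := by
        rw [Complex.dist_eq, norm_sub_rev]
      linarith
    refine le_trans (ENNReal.ofReal_le_ofReal
      (young_aux hp hr (norm_nonneg _))) ?_
    rw [ENNReal.ofReal_add (by positivity)
      (Real.rpow_nonneg (norm_nonneg _) _)]
  calc ∫⁻ z' in Γ, ENNReal.ofReal (‖h z'‖ / ‖z' - z‖)
        ∂(μH[1] : Measure ℂ)
      ≤ ∫⁻ z' in Γ,
          (ENNReal.ofReal (‖z' - z‖ ^ (p - 2) * ‖h z'‖ ^ p) +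
            ENNReal.ofReal (‖z' - z‖ ^ (-2 : ℝ))) ∂(μH[1] : Measure ℂ) :=
        setLIntegral_mono (hg1.add hg2) key
    _ = (∫⁻ z' in Γ,
          ENNReal.ofReal (‖z' - z‖ ^ (p - 2) * ‖h z'‖ ^ p)
            ∂(μH[1] : Measure ℂ)) +
        ∫⁻ z' in Γ, ENNReal.ofReal (‖z' - z‖ ^ (-2 : ℝ))
          ∂(μH[1] : Measure ℂ) := lintegral_add_left hg1 _
    _ < ⊤ := ENNReal.add_lt_top.2 ⟨hLp, aux_inv_sq Γ C hC hCar z hz⟩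
end

section
/- Let 1 ≤ r ≤ p < ∞, let Γ ⊆ ℂ be Carleson with constant C, and let z₀ ∈ ℂ with dist(z₀, Γ) > 0. Let h : ℂ → ℂ be measurable with ∫_Γ |z − z₀|^{p−2} |h(z)|^p dμ(z) < ∞. Then ∫_Γ |z − z₀|^{r−2} |h(z)|^r dμ(z) < ∞. That is, L̇^p(Γ) ⊆ L̇^r(Γ). -/
open MeasureTheory Metric

lemma aux_inv_sq_finite (Γ : Set ℂ) (C : ℝ) (hC : 0 < C)
    (hCar : ∀ (z : ℂ) (ρ : ℝ), 0 < ρ →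
      μH[1] (Γ ∩ ball z ρ) ≤ ENNReal.ofReal (C * ρ))
    (z₀ : ℂ) (hz₀ : 0 < Metric.infDist z₀ Γ) :
    ∫⁻ z in Γ, ENNReal.ofReal (‖z - z₀‖ ^ (-2 : ℝ))
      ∂(μH[1] : Measure ℂ) < ⊤ := by
  set μ : Measure ℂ := μH[1] with hμ
  set d : ℝ := Metric.infDist z₀ Γ with hd
  set f : ℂ → ENNReal := fun z => ENNReal.ofReal (‖z - z₀‖ ^ (-2 : ℝ)) with hf
  set S : ℕ → Set ℂ := fun n => ball z₀ (d * 2 ^ (n + 1)) \ ball z₀ (d * 2 ^ n) with hS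
  have hSmeas : ∀ n, MeasurableSet (S n) := fun n =>
    measurableSet_ball.diff measurableSet_ball
  -- the cover
  have hcover : Γ ⊆ ⋃ n, S n := by
    intro z hz
    have hdz : d ≤ dist z z₀ := by
      rw [dist_comm]; exact Metric.infDist_le_dist_of_mem hz
    have hdpos : (0 : ℝ) < d := hz₀
    have hzpos : 0 < dist z z₀ := lt_of_lt_of_le hdpos hdz
    set x : ℝ := dist z z₀ / d with hx
    have hx1 : (1 : ℝ) ≤ x := (one_le_div hdpos).mpr hdz
    have hxpos : 0 < x := lt_of_lt_of_le one_pos hx1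
    set n : ℕ := ⌊Real.logb 2 x⌋₊ with hn
    have hlogb : (0 : ℝ) ≤ Real.logb 2 x := Real.logb_nonneg one_lt_two hx1
    have h2n : (2 : ℝ) ^ n ≤ x := by
      calc (2 : ℝ) ^ n = (2 : ℝ) ^ ((n : ℝ)) := (Real.rpow_natCast 2 n).symm
        _ ≤ (2 : ℝ) ^ Real.logb 2 x :=
            Real.rpow_le_rpow_of_exponent_le one_le_two (Nat.floor_le hlogb)
        _ = x := Real.rpow_logb two_pos (by norm_num) hxpos
    have hlt : x < (2 : ℝ) ^ (n + 1) := by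
      calc x = (2 : ℝ) ^ Real.logb 2 x :=
            (Real.rpow_logb two_pos (by norm_num) hxpos).symm
        _ < (2 : ℝ) ^ ((n : ℝ) + 1) :=
            Real.rpow_lt_rpow_of_exponent_lt one_lt_two (Nat.lt_floor_add_one _)
        _ = (2 : ℝ) ^ (n + 1) := by
            rw [show ((n : ℝ) + 1) = ((n + 1 : ℕ) : ℝ) by push_cast; ring,
              Real.rpow_natCast]
    refine Set.mem_iUnion.mpr ⟨n, ?_, ?_⟩
    · rw [mem_ball]
      have := (div_lt_iff₀ hdpos).mp hlt
      linarith
    · rw [mem_ball]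
      have := (le_div_iff₀ hdpos).mp h2n
      push_neg
      linarith
  have hdpos : (0 : ℝ) < d := hz₀
  -- bound the integral over each annulus
  have hterm : ∀ n : ℕ, ∫⁻ z, f z ∂(μ.restrict (Γ ∩ S n))
      ≤ ENNReal.ofReal ((2 * C / d) * (1 / 2) ^ n) := by
    intro n
    have hpos : (0 : ℝ) < d * 2 ^ n := by positivity
    have hae : ∀ᵐ z ∂(μ.restrict (Γ ∩ S n)),
        f z ≤ ENNReal.ofReal ((d * 2 ^ n) ^ (-2 : ℝ)) := by
      refine Filter.Eventually.filter_mono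
        (ae_mono (Measure.restrict_mono Set.inter_subset_right le_rfl)) ?_
      filter_upwards [ae_restrict_mem (hSmeas n)] with z hz
      have hz2 : d * 2 ^ n ≤ dist z z₀ := by
        have := hz.2; rw [mem_ball] at this; linarith [not_lt.mp this]
      rw [Complex.dist_eq] at hz2
      exact ENNReal.ofReal_le_ofReal
        (Real.rpow_le_rpow_of_nonpos hpos hz2 (by norm_num))
    have hμn : μ (Γ ∩ S n) ≤ ENNReal.ofReal (C * (d * 2 ^ (n + 1))) := by
      refine le_trans (measure_mono ?_) (hCar z₀ (d * 2 ^ (n + 1)) (by positivity))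
      exact Set.inter_subset_inter_right _ Set.diff_subset
    calc ∫⁻ z, f z ∂(μ.restrict (Γ ∩ S n))
        ≤ ∫⁻ _, ENNReal.ofReal ((d * 2 ^ n) ^ (-2 : ℝ)) ∂(μ.restrict (Γ ∩ S n)) :=
          lintegral_mono_ae hae
      _ = ENNReal.ofReal ((d * 2 ^ n) ^ (-2 : ℝ)) * μ (Γ ∩ S n) := by
          rw [lintegral_const, Measure.restrict_apply_univ]
      _ ≤ ENNReal.ofReal ((d * 2 ^ n) ^ (-2 : ℝ)) *
            ENNReal.ofReal (C * (d * 2 ^ (n + 1))) :=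
          mul_le_mul_right hμn _
      _ = ENNReal.ofReal ((d * 2 ^ n) ^ (-2 : ℝ) * (C * (d * 2 ^ (n + 1)))) :=
          (ENNReal.ofReal_mul (Real.rpow_nonneg hpos.le _)).symm
      _ = ENNReal.ofReal ((2 * C / d) * (1 / 2) ^ n) := by
          congr 1
          rw [show ((-2 : ℝ)) = ((-2 : ℤ) : ℝ) by norm_num, Real.rpow_intCast,
            show ((-2 : ℤ)) = -(2 : ℕ) by norm_num, zpow_neg, zpow_natCast,
            mul_pow, pow_succ]
          have h2n : ((2 : ℝ) ^ n) ≠ 0 := by positivity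
          rw [one_div_pow]
          field_simp
          ring
  have hsum : ∑' n : ℕ, ENNReal.ofReal ((2 * C / d) * (1 / 2) ^ n) < ⊤ := by
    rw [← ENNReal.ofReal_tsum_of_nonneg (fun n => by positivity)
      (((summable_geometric_of_lt_one (by norm_num) (by norm_num))).mul_left _)]
    exact ENNReal.ofReal_lt_top
  calc ∫⁻ z in Γ, f z ∂μ = ∫⁻ z in ⋃ n, Γ ∩ S n, f z ∂μ := by
        rw [← Set.inter_iUnion, Set.inter_eq_left.mpr hcover]
    _ ≤ ∫⁻ z, f z ∂(Measure.sum fun n => μ.restrict (Γ ∩ S n)) :=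
        lintegral_mono' Measure.restrict_iUnion_le le_rfl
    _ = ∑' n, ∫⁻ z, f z ∂(μ.restrict (Γ ∩ S n)) := lintegral_sum_measure _ _
    _ ≤ ∑' n : ℕ, ENNReal.ofReal ((2 * C / d) * (1 / 2) ^ n) :=
        ENNReal.tsum_le_tsum hterm
    _ < ⊤ := hsum

/-- Let `1 ≤ r ≤ p < ∞`, let `Γ ⊆ ℂ` be Carleson with constant
`C`, and `z₀ ∈ ℂ` with `dist(z₀, Γ) > 0`. If `h` is measurable with
`∫_Γ |z - z₀|^{p-2}|h(z)|^p dμ < ∞`, then `∫_Γ |z - z₀|^{r-2}|h(z)|^r dμ < ∞`;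
that is, `L̇^p(Γ) ⊆ L̇^r(Γ)`. -/
theorem statement13 (p r : ℝ) (hr : 1 ≤ r) (hrp : r ≤ p)
    (Γ : Set ℂ) (C : ℝ) (hC : 0 < C)
    (hCar : ∀ (z : ℂ) (ρ : ℝ), 0 < ρ →
      μH[1] (Γ ∩ ball z ρ) ≤ ENNReal.ofReal (C * ρ))
    (z₀ : ℂ) (hz₀ : 0 < Metric.infDist z₀ Γ)
    (h : ℂ → ℂ) (hmeas : Measurable h)
    (hLp : ∫⁻ z in Γ,
        ENNReal.ofReal (‖z - z₀‖ ^ (p - 2) * ‖h z‖ ^ p)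
          ∂(μH[1] : Measure ℂ) < ⊤) :
    ∫⁻ z in Γ,
        ENNReal.ofReal (‖z - z₀‖ ^ (r - 2) * ‖h z‖ ^ r)
          ∂(μH[1] : Measure ℂ) < ⊤ := by
  set μ : Measure ℂ := μH[1] with hμ
  set d : ℝ := Metric.infDist z₀ Γ with hd
  have hdpos : (0 : ℝ) < d := hz₀
  set R : Set ℂ := {z : ℂ | d ≤ dist z z₀} with hR
  have hRmeas : MeasurableSet R :=
    measurableSet_le measurable_const (measurable_id.dist measurable_const)
  have hΓR : Γ ⊆ R := fun z hz => by
    simp only [hR, Set.mem_setOf_eq]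
    rw [dist_comm]; exact Metric.infDist_le_dist_of_mem hz
  set f1 : ℂ → ENNReal :=
    fun z => ENNReal.ofReal (‖z - z₀‖ ^ (-2 : ℝ)) with hf1
  set fp : ℂ → ENNReal := fun z =>
    ENNReal.ofReal (‖z - z₀‖ ^ (p - 2) * ‖h z‖ ^ p) with hfp
  set fr : ℂ → ENNReal := fun z =>
    ENNReal.ofReal (‖z - z₀‖ ^ (r - 2) * ‖h z‖ ^ r) with hfr
  have hf1meas : Measurable f1 :=
    ((continuous_norm.measurable.comp
      (measurable_id.sub measurable_const)).pow measurable_const).ennreal_ofReal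
  have hrestr : μ.restrict Γ = (μ.restrict R).restrict Γ := by
    rw [Measure.restrict_restrict' hRmeas, Set.inter_eq_left.mpr hΓR]
  -- pointwise bound on R
  have keyae : ∀ᵐ z ∂(μ.restrict R), fr z ≤ f1 z + fp z := by
    filter_upwards [ae_restrict_mem hRmeas] with z hz
    set A : ℝ := ‖z - z₀‖ with hA
    set H : ℝ := ‖h z‖ with hH
    have hApos : 0 < A := by
      have : d ≤ dist z z₀ := hz
      rw [Complex.dist_eq] at this
      exact lt_of_lt_of_le hdpos this
    have hHnn : 0 ≤ H := norm_nonneg _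
    have key : A ^ (r - 2) * H ^ r ≤ A ^ (-2 : ℝ) + A ^ (p - 2) * H ^ p := by
      have hAH : (0 : ℝ) ≤ A * H := by positivity
      have hx : (A * H) ^ r ≤ 1 + (A * H) ^ p := by
        rcases le_total (A * H) 1 with hle | hge
        · have h1 : (A * H) ^ r ≤ 1 := Real.rpow_le_one hAH hle (by linarith)
          have h2 : (0 : ℝ) ≤ (A * H) ^ p := Real.rpow_nonneg hAH p
          linarith
        · have h1 : (A * H) ^ r ≤ (A * H) ^ p :=
            Real.rpow_le_rpow_of_exponent_le hge hrp
          linarith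
      have e1 : A ^ (r - 2) * H ^ r = A ^ (-2 : ℝ) * (A * H) ^ r := by
        rw [Real.mul_rpow hApos.le hHnn, ← mul_assoc, ← Real.rpow_add hApos]
        ring_nf
      have e2 : A ^ (-2 : ℝ) * (A * H) ^ p = A ^ (p - 2) * H ^ p := by
        rw [Real.mul_rpow hApos.le hHnn, ← mul_assoc, ← Real.rpow_add hApos]
        ring_nf
      calc A ^ (r - 2) * H ^ r = A ^ (-2 : ℝ) * (A * H) ^ r := e1
        _ ≤ A ^ (-2 : ℝ) * (1 + (A * H) ^ p) :=
            mul_le_mul_of_nonneg_left hx (Real.rpow_nonneg hApos.le _)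
        _ = A ^ (-2 : ℝ) + A ^ (-2 : ℝ) * (A * H) ^ p := by
            have h1 : A ^ (-2 : ℝ) * 1 = A ^ (-2 : ℝ) := mul_one _
            ring
        _ = A ^ (-2 : ℝ) + A ^ (p - 2) * H ^ p := by rw [e2]
    calc fr z ≤ ENNReal.ofReal (A ^ (-2 : ℝ) + A ^ (p - 2) * H ^ p) :=
          ENNReal.ofReal_le_ofReal key
      _ = f1 z + fp z := ENNReal.ofReal_add (Real.rpow_nonneg hApos.le _)
          (mul_nonneg (Real.rpow_nonneg hApos.le _) (Real.rpow_nonneg hHnn _))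
  calc ∫⁻ z in Γ, fr z ∂μ = ∫⁻ z, fr z ∂((μ.restrict R).restrict Γ) := by
        rw [← hrestr]
    _ ≤ ∫⁻ z, f1 z + fp z ∂((μ.restrict R).restrict Γ) :=
        lintegral_mono_ae (keyae.filter_mono (ae_mono Measure.restrict_le_self))
    _ = ∫⁻ z in Γ, f1 z + fp z ∂μ := by rw [← hrestr]
    _ = (∫⁻ z in Γ, f1 z ∂μ) + ∫⁻ z in Γ, fp z ∂μ := lintegral_add_left hf1meas _
    _ < ⊤ := ENNReal.add_lt_top.mpr
        ⟨aux_inv_sq_finite Γ C hC hCar z₀ hz₀, hLp⟩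
end

section
/- Let p, q, r ∈ [1, ∞) satisfy 1/p + 1/q = 1/r. Let Γ ⊆ ℂ be Carleson with constant C and let z₀ ∈ ℂ with dist(z₀, Γ) > 0. Let f, g : ℂ → ℂ be measurable with ∫_Γ |z − z₀|^{p−2} |f(z)|^p dμ(z) < ∞ and ∫_Γ |z − z₀|^{q−2} |g(z)|^q dμ(z) < ∞. Then both ∫_Γ |z − z₀|^{r−2} |z·f(z)·g(z)|^r dμ(z) < ∞ and ∫_Γ |z − z₀|^{r−2} |f(z)·g(z)|^r dμ(z) < ∞. That is, if f ∈ L̇^p(Γ) and g ∈ L̇^q(Γ), then the functions z·f(z)·g(z) and f·g belong to L̇^r(Γ). -/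
open MeasureTheory Metric

/-- Let `p, q, r ∈ [1,∞)` with `1/p + 1/q = 1/r`, let `Γ ⊆ ℂ` be
Carleson with constant `C`, and `z₀ ∈ ℂ` with `dist(z₀, Γ) > 0`. If
`f ∈ L̇^p(Γ)` and `g ∈ L̇^q(Γ)`, then both `z·f(z)·g(z)` and `f·g` belong to
`L̇^r(Γ)`. -/
theorem statement14 (p q r : ℝ) (hp : 1 ≤ p) (hq : 1 ≤ q) (hr : 1 ≤ r)
    (hpqr : 1 / p + 1 / q = 1 / r)
    (Γ : Set ℂ) (C : ℝ) (hC : 0 < C)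
    (hCar : ∀ (z : ℂ) (ρ : ℝ), 0 < ρ →
      μH[1] (Γ ∩ ball z ρ) ≤ ENNReal.ofReal (C * ρ))
    (z₀ : ℂ) (hz₀ : 0 < Metric.infDist z₀ Γ)
    (f g : ℂ → ℂ) (hf_meas : Measurable f) (hg_meas : Measurable g)
    (hf : ∫⁻ z in Γ,
        ENNReal.ofReal (‖z - z₀‖ ^ (p - 2) * ‖f z‖ ^ p)
          ∂(μH[1] : Measure ℂ) < ⊤)
    (hg : ∫⁻ z in Γ,
        ENNReal.ofReal (‖z - z₀‖ ^ (q - 2) * ‖g z‖ ^ q)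
          ∂(μH[1] : Measure ℂ) < ⊤) :
    (∫⁻ z in Γ,
        ENNReal.ofReal (‖z - z₀‖ ^ (r - 2) * ‖z * f z * g z‖ ^ r)
          ∂(μH[1] : Measure ℂ) < ⊤) ∧
      (∫⁻ z in Γ,
        ENNReal.ofReal (‖z - z₀‖ ^ (r - 2) * ‖f z * g z‖ ^ r)
          ∂(μH[1] : Measure ℂ) < ⊤) := by
  have hp0 : (0:ℝ) < p := lt_of_lt_of_le one_pos hp
  have hq0 : (0:ℝ) < q := lt_of_lt_of_le one_pos hq
  have hr0 : (0:ℝ) < r := lt_of_lt_of_le one_pos hr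
  set d := Metric.infDist z₀ Γ with hdd
  have hd : 0 < d := hz₀
  -- r < p and r < q
  have hrp : r < p := by
    have h1 : 1/p < 1/r := by
      have : 0 < 1/q := by positivity
      linarith
    exact lt_of_one_div_lt_one_div hp0 h1
  have hrq : r < q := by
    have h1 : 1/q < 1/r := by
      have : 0 < 1/p := by positivity
      linarith
    exact lt_of_one_div_lt_one_div hq0 h1
  -- the auxiliary functions
  set F : ℂ → ENNReal := fun z =>
    ENNReal.ofReal (‖z - z₀‖ ^ (1 - 2/p) * ‖f z‖) with hF
  set G : ℂ → ENNReal := fun z =>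
    ENNReal.ofReal (‖z - z₀‖ ^ (1 - 2/q) * ‖g z‖) with hG
  have hFm : Measurable F := by
    apply ENNReal.measurable_ofReal.comp
    exact ((continuous_norm.measurable.comp (measurable_id.sub_const z₀)).pow measurable_const).mul
      (continuous_norm.measurable.comp hf_meas)
  have hGm : Measurable G := by
    apply ENNReal.measurable_ofReal.comp
    exact ((continuous_norm.measurable.comp (measurable_id.sub_const z₀)).pow measurable_const).mul
      (continuous_norm.measurable.comp hg_meas)
  have hFp : ∀ z, F z ^ p
      = ENNReal.ofReal (‖z - z₀‖ ^ (p - 2) * ‖f z‖ ^ p) := by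
    intro z
    rw [hF, ENNReal.ofReal_rpow_of_nonneg (by positivity) hp0.le,
      Real.mul_rpow (by positivity) (by positivity), ← Real.rpow_mul (by positivity)]
    congr 3
    field_simp
  have hGq : ∀ z, G z ^ q
      = ENNReal.ofReal (‖z - z₀‖ ^ (q - 2) * ‖g z‖ ^ q) := by
    intro z
    rw [hG, ENNReal.ofReal_rpow_of_nonneg (by positivity) hq0.le,
      Real.mul_rpow (by positivity) (by positivity), ← Real.rpow_mul (by positivity)]
    congr 3
    field_simp
  have hmul : q * r + p * r = p * q := by
    have h1 : (1/p + 1/q) * (p*q*r) = (1/r) * (p*q*r) := by rw [hpqr]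
    have e1 : (1/p) * (p*q*r) = q*r := by field_simp; try ring
    have e2 : (1/q) * (p*q*r) = p*r := by field_simp; try ring
    have e3 : (1/r) * (p*q*r) = p*q := by field_simp; try ring
    rw [add_mul, e1, e2, e3] at h1
    exact h1
  -- Hölder
  have hconj : (p/r).HolderConjugate (q/r) := by
    constructor
    · rw [inv_div, inv_div, inv_one, div_add_div _ _ hp0.ne' hq0.ne',
        div_eq_one_iff_eq (by positivity)]
      linarith
    · positivity
    · positivity
  have holder := ENNReal.lintegral_mul_le_Lp_mul_Lq ((μH[1] : Measure ℂ).restrict Γ) hconj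
    ((hFm.pow_const r).aemeasurable) ((hGm.pow_const r).aemeasurable)
  have hI : ∫⁻ z in Γ, (F z * G z) ^ r ∂(μH[1] : Measure ℂ) < ⊤ := by
    have heq : ∀ z, (F z * G z) ^ r = ((fun z => F z ^ r) * fun z => G z ^ r) z := by
      intro z
      simp only [Pi.mul_apply]
      exact ENNReal.mul_rpow_of_nonneg _ _ hr0.le
    calc ∫⁻ z in Γ, (F z * G z) ^ r ∂(μH[1] : Measure ℂ)
        = ∫⁻ z in Γ, ((fun z => F z ^ r) * fun z => G z ^ r) z ∂(μH[1] : Measure ℂ) :=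
          lintegral_congr heq
      _ ≤ (∫⁻ z in Γ, (F z ^ r) ^ (p/r) ∂(μH[1] : Measure ℂ)) ^ (1/(p/r)) *
          (∫⁻ z in Γ, (G z ^ r) ^ (q/r) ∂(μH[1] : Measure ℂ)) ^ (1/(q/r)) := holder
      _ < ⊤ := by
          apply ENNReal.mul_lt_top
          · apply ENNReal.rpow_lt_top_of_nonneg (by positivity)
            have : ∀ z, (F z ^ r) ^ (p/r) = F z ^ p := by
              intro z
              rw [← ENNReal.rpow_mul]
              congr 1
              field_simp
            rw [lintegral_congr this, lintegral_congr hFp]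
            exact hf.ne
          · apply ENNReal.rpow_lt_top_of_nonneg (by positivity)
            have : ∀ z, (G z ^ r) ^ (q/r) = G z ^ q := by
              intro z
              rw [← ENNReal.rpow_mul]
              congr 1
              field_simp
            rw [lintegral_congr this, lintegral_congr hGq]
            exact hg.ne
  -- a.e. membership in the closure
  have hmem : ∀ᵐ z ∂((μH[1] : Measure ℂ).restrict Γ), z ∈ closure Γ := by
    have h1 : ∀ᵐ z ∂((μH[1] : Measure ℂ).restrict (closure Γ)), z ∈ closure Γ :=
      ae_restrict_mem isClosed_closure.measurableSet
    exact h1.filter_mono (ae_mono (Measure.restrict_mono subset_closure le_rfl))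
  -- basic distance bound on the closure
  have hdist : ∀ z ∈ closure Γ, d ≤ ‖z - z₀‖ := by
    intro z hz
    have h1 : Metric.infDist z₀ (closure Γ) ≤ dist z₀ z :=
      Metric.infDist_le_dist_of_mem hz
    rw [Metric.infDist_closure] at h1
    rw [dist_comm, Complex.dist_eq] at h1
    exact h1
  -- key identity
  have hkey : ∀ z : ℂ, d ≤ ‖z - z₀‖ →
      (‖z - z₀‖ ^ (1 - 2/p) * ‖f z‖ *
        (‖z - z₀‖ ^ (1 - 2/q) * ‖g z‖)) ^ r
      = ‖z - z₀‖ ^ (2*r - 2) * (‖f z‖ * ‖g z‖) ^ r := by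
    intro z ha
    have ha0 : 0 < ‖z - z₀‖ := lt_of_lt_of_le hd ha
    have h1 : ‖z - z₀‖ ^ (1 - 2/p) * ‖f z‖ *
        (‖z - z₀‖ ^ (1 - 2/q) * ‖g z‖)
        = ‖z - z₀‖ ^ (2 - 2/r) * (‖f z‖ * ‖g z‖) := by
      rw [show (2 - 2/r : ℝ) = (1 - 2/p) + (1 - 2/q) by
        field_simp
        linear_combination (2:ℝ) * hmul]
      rw [Real.rpow_add ha0]
      ring
    rw [h1, Real.mul_rpow (by positivity) (by positivity),
      ← Real.rpow_mul ha0.le]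
    congr 2
    field_simp
  constructor
  · -- z * f z * g z
    set K : ℝ := (1 + ‖z₀‖ / d) ^ r with hK
    have hbound : ∀ᵐ z ∂((μH[1] : Measure ℂ).restrict Γ),
        ENNReal.ofReal (‖z - z₀‖ ^ (r - 2) * ‖z * f z * g z‖ ^ r)
          ≤ ENNReal.ofReal K * (F z * G z) ^ r := by
      filter_upwards [hmem] with z hz
      have ha : d ≤ ‖z - z₀‖ := hdist z hz
      have ha0 : 0 < ‖z - z₀‖ := lt_of_lt_of_le hd ha
      rw [hF, hG, ← ENNReal.ofReal_mul (by positivity),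
        ENNReal.ofReal_rpow_of_nonneg (by positivity) hr0.le,
        ← ENNReal.ofReal_mul (by positivity)]
      apply ENNReal.ofReal_le_ofReal
      rw [hkey z ha, hK]
      have hz_le : ‖z‖ ≤ ‖z - z₀‖ * (1 + ‖z₀‖ / d) := by
        have h1 : ‖z‖ ≤ ‖z - z₀‖ + ‖z₀‖ := by
          have := norm_add_le (z - z₀) z₀
          simpa using this
        have h2 : ‖z₀‖ ≤ ‖z - z₀‖ * (‖z₀‖ / d) := by
          rw [mul_div_assoc']
          rw [le_div_iff₀ hd]
          nlinarith [norm_nonneg z₀]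
        nlinarith
      have habs : ‖z * f z * g z‖
          = ‖z‖ * (‖f z‖ * ‖g z‖) := by
        simp [map_mul]; ring
      rw [habs, Real.mul_rpow (by positivity) (by positivity)]
      have hzr : ‖z‖ ^ r
          ≤ ‖z - z₀‖ ^ r * (1 + ‖z₀‖ / d) ^ r := by
        rw [← Real.mul_rpow ha0.le (by positivity)]
        exact Real.rpow_le_rpow (norm_nonneg z) hz_le hr0.le
      calc ‖z - z₀‖ ^ (r - 2) *
            (‖z‖ ^ r * (‖f z‖ * ‖g z‖) ^ r)
          ≤ ‖z - z₀‖ ^ (r - 2) *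
            ((‖z - z₀‖ ^ r * (1 + ‖z₀‖ / d) ^ r) *
              (‖f z‖ * ‖g z‖) ^ r) := by
            apply mul_le_mul_of_nonneg_left _ (by positivity)
            exact mul_le_mul_of_nonneg_right hzr (by positivity)
        _ = (1 + ‖z₀‖ / d) ^ r *
            (‖z - z₀‖ ^ (2*r - 2) *
              (‖f z‖ * ‖g z‖) ^ r) := by
            rw [show (2*r - 2 : ℝ) = (r - 2) + r by ring, Real.rpow_add ha0]
            ring
    calc ∫⁻ z in Γ,
          ENNReal.ofReal (‖z - z₀‖ ^ (r - 2) * ‖z * f z * g z‖ ^ r)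
            ∂(μH[1] : Measure ℂ)
        ≤ ∫⁻ z in Γ, ENNReal.ofReal K * (F z * G z) ^ r ∂(μH[1] : Measure ℂ) :=
          lintegral_mono_ae hbound
      _ = ENNReal.ofReal K * ∫⁻ z in Γ, (F z * G z) ^ r ∂(μH[1] : Measure ℂ) :=
          lintegral_const_mul _ ((hFm.mul hGm).pow_const r)
      _ < ⊤ := ENNReal.mul_lt_top ENNReal.ofReal_lt_top hI
  · -- f z * g z
    set K : ℝ := d ^ (-r) with hK
    have hbound : ∀ᵐ z ∂((μH[1] : Measure ℂ).restrict Γ),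
        ENNReal.ofReal (‖z - z₀‖ ^ (r - 2) * ‖f z * g z‖ ^ r)
          ≤ ENNReal.ofReal K * (F z * G z) ^ r := by
      filter_upwards [hmem] with z hz
      have ha : d ≤ ‖z - z₀‖ := hdist z hz
      have ha0 : 0 < ‖z - z₀‖ := lt_of_lt_of_le hd ha
      rw [hF, hG, ← ENNReal.ofReal_mul (by positivity),
        ENNReal.ofReal_rpow_of_nonneg (by positivity) hr0.le,
        ← ENNReal.ofReal_mul (by positivity)]
      apply ENNReal.ofReal_le_ofReal
      rw [hkey z ha, hK]
      have habs : ‖f z * g z‖ = ‖f z‖ * ‖g z‖ :=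
        norm_mul _ _
      rw [habs]
      have hinv : ‖z - z₀‖ ^ (-r) ≤ d ^ (-r) :=
        Real.rpow_le_rpow_of_nonpos hd ha (by linarith)
      calc ‖z - z₀‖ ^ (r - 2) * (‖f z‖ * ‖g z‖) ^ r
          = ‖z - z₀‖ ^ (-r) *
            (‖z - z₀‖ ^ (2*r - 2) *
              (‖f z‖ * ‖g z‖) ^ r) := by
            rw [show (r - 2 : ℝ) = (-r) + (2*r - 2) by ring, Real.rpow_add ha0]
            ring
        _ ≤ d ^ (-r) *
            (‖z - z₀‖ ^ (2*r - 2) *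
              (‖f z‖ * ‖g z‖) ^ r) :=
            mul_le_mul_of_nonneg_right hinv (by positivity)
    calc ∫⁻ z in Γ,
          ENNReal.ofReal (‖z - z₀‖ ^ (r - 2) * ‖f z * g z‖ ^ r)
            ∂(μH[1] : Measure ℂ)
        ≤ ∫⁻ z in Γ, ENNReal.ofReal K * (F z * G z) ^ r ∂(μH[1] : Measure ℂ) :=
          lintegral_mono_ae hbound
      _ = ENNReal.ofReal K * ∫⁻ z in Γ, (F z * G z) ^ r ∂(μH[1] : Measure ℂ) :=
          lintegral_const_mul _ ((hFm.mul hGm).pow_const r)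
      _ < ⊤ := ENNReal.mul_lt_top ENNReal.ofReal_lt_top hI
end

section
/- Let 1 ≤ p < ∞, let Γ ⊆ ℂ be a Borel set, let z₀ ∈ ℂ \ Γ, and let φ(z) = 1/(z − z₀), a bijection of ℂ \ {z₀} onto ℂ \ {0} with inverse φ⁻¹(w) = z₀ + 1/w. Then for every measurable h : ℂ → ℂ, ∫_Γ |z − z₀|^{p−2} |h(z)|^p dμ(z) = ∫_{φ(Γ)} |w^{−1} · h(φ⁻¹(w))|^p dμ(w), where φ(Γ) = {1/(z − z₀) : z ∈ Γ}. In particular, the map (Φh)(w) = w^{−1} h(φ⁻¹(w)) carries L̇^p(Γ) isometrically onto L^p(φ(Γ), μ). -/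
open MeasureTheory Metric
open Set
open scoped NNReal ENNReal

lemma lip_inv_shift (c : ℂ) (r : ℝ≥0) (hr : 0 < r) (s : Set ℂ)
    (hs : ∀ z ∈ s, (r : ℝ) ≤ ‖z - c‖) :
    LipschitzOnWith (r⁻¹ * r⁻¹) (fun z => (z - c)⁻¹) s := by
  apply LipschitzOnWith.of_dist_le_mul
  intro x hx y hy
  have hxr := hs x hx; have hyr := hs y hy
  have hr' : (0:ℝ) < r := hr
  have hx0 : x - c ≠ 0 := by
    intro h0; rw [h0] at hxr; simp at hxr; nlinarith
  have hy0 : y - c ≠ 0 := by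
    intro h0; rw [h0] at hyr; simp at hyr; nlinarith
  have hxa : (0:ℝ) < ‖x - c‖ := lt_of_lt_of_le hr' hxr
  have hya : (0:ℝ) < ‖y - c‖ := lt_of_lt_of_le hr' hyr
  have key : (x - c)⁻¹ - (y - c)⁻¹ = (y - x) * ((x - c)⁻¹ * (y - c)⁻¹) := by
    field_simp
    ring
  rw [Complex.dist_eq, Complex.dist_eq, key]
  rw [norm_mul, norm_mul, norm_inv, norm_inv]
  have habs : ‖y - x‖ = ‖x - y‖ := by
    rw [norm_sub_rev]
  rw [habs]
  push_cast
  rw [mul_comm ((r:ℝ)⁻¹ * (r:ℝ)⁻¹) _]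
  apply mul_le_mul_of_nonneg_left _ (norm_nonneg _)
  exact mul_le_mul (inv_anti₀ hr' hxr) (inv_anti₀ hr' hyr) (by positivity) (by positivity)

lemma lip_inv_add (c : ℂ) (r : ℝ≥0) (hr : 0 < r) (s : Set ℂ)
    (hs : ∀ w ∈ s, (r : ℝ) ≤ ‖w‖) :
    LipschitzOnWith (r⁻¹ * r⁻¹) (fun w => c + w⁻¹) s := by
  apply LipschitzOnWith.of_dist_le_mul
  intro x hx y hy
  have := (lip_inv_shift 0 r hr s (by simpa using hs)).dist_le_mul x hx y hy
  simpa [dist_add_left] using this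

lemma le_of_sq (X Y : ℝ≥0∞) (h : ∀ q : ℝ≥0, 1 < q → X ≤ (q : ℝ≥0∞)^2 * Y) : X ≤ Y := by
  by_cases hY : Y = ⊤
  · simp [hY]
  have T : Filter.Tendsto (fun q : ℝ≥0 => ((q^2 : ℝ≥0) : ℝ≥0∞) * Y) (nhdsWithin 1 (Set.Ioi 1)) (nhds (((1^2:ℝ≥0) : ℝ≥0∞) * Y)) := by
    apply ENNReal.Tendsto.mul_const
    · exact (ENNReal.continuous_coe.tendsto _).comp
        (((continuous_pow 2).tendsto (1:ℝ≥0)).mono_left nhdsWithin_le_nhds)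
    · right; exact hY
  have := ge_of_tendsto T (by
    filter_upwards [self_mem_nhdsWithin] with q hq
    simpa [ENNReal.coe_pow] using h q hq)
  simpa using this

lemma key_measure (z₀ : ℂ) (A : Set ℂ) (hA : MeasurableSet A) (hA0 : ∀ z ∈ A, z ≠ z₀) :
    μH[1] ((fun z : ℂ => (z - z₀)⁻¹) '' A)
      = ∫⁻ z in A, ((‖z - z₀‖₊ : ℝ≥0∞) ^ 2)⁻¹ ∂(μH[1] : Measure ℂ) := by
  set g : ℂ → ℂ := fun z => (z - z₀)⁻¹ with hg_def
  set D : ℂ → ℝ≥0∞ := fun z => ((‖z - z₀‖₊ : ℝ≥0∞) ^ 2)⁻¹ with hD_def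
  have hDmeas : Measurable D :=
    (((measurable_nnnorm.comp (measurable_id.sub_const z₀)).coe_nnreal_ennreal).pow_const 2).inv
  have hgmeas : Measurable g := (measurable_id.sub_const z₀).inv
  have hginj : Function.Injective g := fun a b hab => sub_left_injective (inv_injective hab)
  have hemb : MeasurableEmbedding g := hgmeas.measurableEmbedding hginj
  have habs_eq : ∀ z : ℂ, ‖z - z₀‖ = ((‖z - z₀‖₊ : ℝ≥0) : ℝ) := by
    intro z; rw [coe_nnnorm]
  have main : ∀ q : ℝ≥0, 1 < q →
      μH[1] (g '' A) ≤ (q : ℝ≥0∞)^2 * ∫⁻ z in A, D z ∂(μH[1] : Measure ℂ) ∧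
      (∫⁻ z in A, D z ∂(μH[1] : Measure ℂ)) ≤ (q : ℝ≥0∞)^2 * μH[1] (g '' A) := by
    intro q hq
    have hq0 : q ≠ 0 := by positivity
    set S : ℤ → Set ℂ := fun k => A ∩ {z | ‖z - z₀‖₊ ∈ Ico (q ^ k) (q ^ (k+1))} with hS_def
    have hSmeas : ∀ k, MeasurableSet (S k) := fun k =>
      hA.inter ((measurable_nnnorm.comp (measurable_id.sub_const z₀)) measurableSet_Ico)
    have hUnion : (⋃ k, S k) = A := by
      ext z
      simp only [mem_iUnion, hS_def, mem_inter_iff, mem_setOf_eq]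
      constructor
      · rintro ⟨k, hk, -⟩; exact hk
      · intro hz
        have hzpos : 0 < ‖z - z₀‖₊ := by
          rw [pos_iff_ne_zero, ne_eq, nnnorm_eq_zero, sub_eq_zero]
          exact hA0 z hz
        obtain ⟨k, hk⟩ := exists_mem_Ico_zpow hzpos hq
        exact ⟨k, hz, hk⟩
    have hdisj : Pairwise (Function.onFun Disjoint S) := by
      intro k l hkl
      apply Set.disjoint_left.2
      rintro z ⟨-, hk1, hk2⟩ ⟨-, hl1, hl2⟩
      rcases hkl.lt_or_gt with hlt | hlt
      · have : q ^ (k+1) ≤ q ^ l := zpow_le_zpow_right₀ hq.le (by omega)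
        exact absurd hl1 (not_le.2 (lt_of_lt_of_le hk2 this))
      · have : q ^ (l+1) ≤ q ^ k := zpow_le_zpow_right₀ hq.le (by omega)
        exact absurd hk1 (not_le.2 (lt_of_lt_of_le hl2 this))
    have hXsum : μH[1] (g '' A) = ∑' k : ℤ, μH[1] (g '' S k) := by
      conv_lhs => rw [← hUnion, Set.image_iUnion]
      exact measure_iUnion
        (fun k l hkl => (Set.disjoint_image_iff hginj).2 (hdisj hkl))
        (fun k => hemb.measurableSet_image.2 (hSmeas k))
    have hYsum : ∫⁻ z in A, D z ∂(μH[1] : Measure ℂ)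
        = ∑' k : ℤ, ∫⁻ z in S k, D z ∂(μH[1] : Measure ℂ) := by
      conv_lhs => rw [← hUnion]
      exact lintegral_iUnion hSmeas hdisj D
    -- per-shell facts
    have hr0 : ∀ k : ℤ, 0 < q ^ k := fun k => zpow_pos (pos_iff_ne_zero.2 hq0) k
    -- Lipschitz bound for g on S k
    have hXk : ∀ k : ℤ, μH[1] (g '' S k) ≤ (((q^k)⁻¹ * (q^k)⁻¹ : ℝ≥0) : ℝ≥0∞) * μH[1] (S k) := by
      intro k
      have lip : LipschitzOnWith ((q^k)⁻¹ * (q^k)⁻¹) g (S k) := by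
        apply lip_inv_shift z₀ (q^k) (hr0 k)
        rintro z ⟨-, h1, -⟩
        rw [habs_eq]; exact_mod_cast h1
      have := lip.hausdorffMeasure_image_le (zero_le_one)
      simpa [ENNReal.rpow_one] using this
    -- lower bound for μ (S k) via inverse map
    have hMk : ∀ k : ℤ, μH[1] (S k) ≤ (((q^(k+1)) * (q^(k+1)) : ℝ≥0) : ℝ≥0∞) * μH[1] (g '' S k) := by
      intro k
      have hR0 : 0 < (q ^ (k+1))⁻¹ := by
        rw [pos_iff_ne_zero]; exact inv_ne_zero (zpow_ne_zero _ hq0)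
      have lip : LipschitzOnWith ((q^(k+1))⁻¹⁻¹ * (q^(k+1))⁻¹⁻¹) (fun w => z₀ + w⁻¹) (g '' S k) := by
        apply lip_inv_add z₀ ((q^(k+1))⁻¹) hR0
        rintro w ⟨z, ⟨-, h1, h2⟩, rfl⟩
        have hz0 : (0:ℝ) < ‖z - z₀‖ := by
          rw [habs_eq]; exact_mod_cast (hr0 k).trans_le h1
        have : ‖z - z₀‖ ≤ ((q ^ (k+1) : ℝ≥0) : ℝ) := by
          rw [habs_eq]; exact_mod_cast h2.le
        calc ((((q^(k+1))⁻¹ : ℝ≥0)) : ℝ) = (((q^(k+1)) : ℝ≥0) : ℝ)⁻¹ := NNReal.coe_inv _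
          _ ≤ (‖z - z₀‖)⁻¹ := inv_anti₀ hz0 this
          _ = ‖(z - z₀)⁻¹‖ := (norm_inv _).symm
      have him : (fun w => z₀ + w⁻¹) '' (g '' S k) = S k := by
        rw [← Set.image_comp]
        have : ∀ z ∈ S k, (fun w => z₀ + w⁻¹) (g z) = id z := by
          intro z _; simp only [hg_def, Function.comp, inv_inv, id_eq]; ring
        calc ((fun w => z₀ + w⁻¹) ∘ g) '' S k = id '' S k := Set.image_congr this
          _ = S k := Set.image_id _
      have := lip.hausdorffMeasure_image_le (zero_le_one : (0:ℝ) ≤ 1)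
      rw [him] at this
      simpa [ENNReal.rpow_one, inv_inv] using this
    -- integral bounds
    have hYk_lo : ∀ k : ℤ, (((((q^(k+1)) : ℝ≥0) : ℝ≥0∞))^2)⁻¹ * μH[1] (S k)
        ≤ ∫⁻ z in S k, D z ∂(μH[1] : Measure ℂ) := by
      intro k
      rw [← setLIntegral_const (S k)]
      apply setLIntegral_mono' (hSmeas k)
      rintro z ⟨-, -, h2⟩
      apply ENNReal.inv_le_inv.2
      gcongr
    have hYk_hi : ∀ k : ℤ, (∫⁻ z in S k, D z ∂(μH[1] : Measure ℂ))
        ≤ ((((q^k : ℝ≥0) : ℝ≥0∞))^2)⁻¹ * μH[1] (S k) := by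
      intro k
      rw [← setLIntegral_const (S k)]
      apply setLIntegral_mono' (hSmeas k)
      rintro z ⟨-, h1, -⟩
      apply ENNReal.inv_le_inv.2
      gcongr
    constructor
    · rw [hXsum, hYsum, ← ENNReal.tsum_mul_left]
      apply ENNReal.tsum_le_tsum
      intro k
      calc μH[1] (g '' S k) ≤ (((q^k)⁻¹ * (q^k)⁻¹ : ℝ≥0) : ℝ≥0∞) * μH[1] (S k) := hXk k
        _ = (q : ℝ≥0∞)^2 * (((((q^(k+1)) : ℝ≥0) : ℝ≥0∞))^2)⁻¹ * μH[1] (S k) := by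
            congr 1
            rw [← ENNReal.coe_pow, ← ENNReal.coe_pow,
              ← ENNReal.coe_inv (pow_ne_zero _ (zpow_ne_zero _ hq0)), ← ENNReal.coe_mul,
              ENNReal.coe_inj, zpow_add_one₀ hq0]
            have h1 : q ^ k ≠ 0 := zpow_ne_zero _ hq0
            field_simp
        _ ≤ (q : ℝ≥0∞)^2 * (∫⁻ z in S k, D z ∂(μH[1] : Measure ℂ)) := by
            rw [mul_assoc]
            exact mul_le_mul_right (hYk_lo k) _
    · rw [hXsum, hYsum, ← ENNReal.tsum_mul_left]
      apply ENNReal.tsum_le_tsum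
      intro k
      calc (∫⁻ z in S k, D z ∂(μH[1] : Measure ℂ))
          ≤ ((((q^k : ℝ≥0) : ℝ≥0∞))^2)⁻¹ * μH[1] (S k) := hYk_hi k
        _ ≤ ((((q^k : ℝ≥0) : ℝ≥0∞))^2)⁻¹ * ((((q^(k+1)) * (q^(k+1)) : ℝ≥0) : ℝ≥0∞) * μH[1] (g '' S k)) :=
            mul_le_mul_right (hMk k) _
        _ = (q : ℝ≥0∞)^2 * μH[1] (g '' S k) := by
            rw [← mul_assoc]
            congr 1
            rw [← ENNReal.coe_pow, ← ENNReal.coe_pow,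
              ← ENNReal.coe_inv (pow_ne_zero _ (zpow_ne_zero _ hq0)), ← ENNReal.coe_mul,
              ENNReal.coe_inj, zpow_add_one₀ hq0]
            have h1 : q ^ k ≠ 0 := zpow_ne_zero _ hq0
            field_simp
  exact le_antisymm
    (le_of_sq _ _ fun q hq => (main q hq).1)
    (le_of_sq _ _ fun q hq => (main q hq).2)

/-- Let `1 ≤ p < ∞`, `Γ ⊆ ℂ` Borel, `z₀ ∉ Γ`, and
`φ(z) = 1/(z - z₀)` with inverse `φ⁻¹(w) = z₀ + 1/w`. Then for every measurable
`h : ℂ → ℂ`,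
`∫_Γ |z - z₀|^{p-2}|h(z)|^p dμ(z) = ∫_{φ(Γ)} |w⁻¹·h(φ⁻¹(w))|^p dμ(w)`;
i.e. `(Φh)(w) = w⁻¹ h(φ⁻¹(w))` carries `L̇^p(Γ)` isometrically onto
`L^p(φ(Γ), μ)`. -/
theorem statement15 (p : ℝ) (hp : 1 ≤ p) (Γ : Set ℂ) (hΓ : MeasurableSet Γ)
    (z₀ : ℂ) (hz₀ : z₀ ∉ Γ) (h : ℂ → ℂ) (hmeas : Measurable h) :
    ∫⁻ z in Γ,
        ENNReal.ofReal (‖z - z₀‖ ^ (p - 2) * ‖h z‖ ^ p)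
          ∂(μH[1] : Measure ℂ)
      = ∫⁻ w in (fun z : ℂ => (z - z₀)⁻¹) '' Γ,
          ENNReal.ofReal (‖w⁻¹ * h (z₀ + w⁻¹)‖ ^ p)
            ∂(μH[1] : Measure ℂ) := by
  set g : ℂ → ℂ := fun z => (z - z₀)⁻¹ with hg_def
  set D : ℂ → ℝ≥0∞ := fun z => ((‖z - z₀‖₊ : ℝ≥0∞) ^ 2)⁻¹ with hD_def
  set F : ℂ → ℝ≥0∞ := fun w => ENNReal.ofReal (‖w⁻¹ * h (z₀ + w⁻¹)‖ ^ p) with hF_def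
  have hDmeas : Measurable D :=
    (((measurable_nnnorm.comp (measurable_id.sub_const z₀)).coe_nnreal_ennreal).pow_const 2).inv
  have hgmeas : Measurable g := (measurable_id.sub_const z₀).inv
  have hginj : Function.Injective g := fun a b hab => sub_left_injective (inv_injective hab)
  have hemb : MeasurableEmbedding g := hgmeas.measurableEmbedding hginj
  have hFmeas : Measurable F := by
    apply ENNReal.measurable_ofReal.comp
    apply Measurable.comp (Real.continuous_rpow_const (by linarith : (0:ℝ) ≤ p)).measurable
    exact continuous_norm.measurable.comp
      (measurable_inv.mul (hmeas.comp (measurable_inv.const_add z₀)))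
  have hν : Measure.map g (((μH[1] : Measure ℂ).restrict Γ).withDensity D)
      = (μH[1] : Measure ℂ).restrict (g '' Γ) := by
    ext S hS
    rw [Measure.map_apply hgmeas hS, withDensity_apply _ (hgmeas hS),
        Measure.restrict_restrict (hgmeas hS), Measure.restrict_apply hS]
    have hsub : ∀ z ∈ g ⁻¹' S ∩ Γ, z ≠ z₀ := fun z hz h0 => hz₀ (h0 ▸ hz.2)
    rw [← key_measure z₀ _ ((hgmeas hS).inter hΓ) hsub, hg_def, Set.image_preimage_inter]
  calc ∫⁻ z in Γ, ENNReal.ofReal (‖z - z₀‖ ^ (p - 2) * ‖h z‖ ^ p)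
          ∂(μH[1] : Measure ℂ)
      = ∫⁻ z in Γ, (D * fun z => F (g z)) z ∂(μH[1] : Measure ℂ) := by
        apply setLIntegral_congr_fun hΓ
        intro z hz
        have hz0 : z - z₀ ≠ 0 := sub_ne_zero.2 (fun h0 => hz₀ (h0 ▸ hz))
        have ha : (0:ℝ) < ‖z - z₀‖ := by
          rw [norm_pos_iff]; exact hz0
        have hFg : F (g z) = ENNReal.ofReal
            (‖z - z₀‖ ^ p * ‖h z‖ ^ p) := by
          simp only [hF_def, hg_def, inv_inv, add_sub_cancel, norm_mul]
          rw [Real.mul_rpow (norm_nonneg _) (norm_nonneg _)]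
        have hDz : D z = ENNReal.ofReal ((‖z - z₀‖ ^ 2)⁻¹) := by
          simp only [hD_def]
          rw [← enorm_eq_nnnorm, ← ofReal_norm,
            ← ENNReal.ofReal_pow (norm_nonneg _),
            ← ENNReal.ofReal_inv_of_pos (by positivity)]
        simp only [Pi.mul_apply, hFg, hDz]
        rw [← ENNReal.ofReal_mul (by positivity)]
        congr 1
        have h2 : ‖z - z₀‖ ^ (p - 2)
            = ‖z - z₀‖ ^ p / ‖z - z₀‖ ^ (2:ℝ) := by
          rw [← Real.rpow_sub ha]
        rw [h2, show ((2:ℝ)) = ((2:ℕ):ℝ) by norm_num, Real.rpow_natCast]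
        field_simp
    _ = ∫⁻ z, F (g z) ∂(((μH[1] : Measure ℂ).restrict Γ).withDensity D) := by
        exact (lintegral_withDensity_eq_lintegral_mul _ hDmeas (hFmeas.comp hgmeas)).symm
    _ = ∫⁻ w, F w ∂(Measure.map g (((μH[1] : Measure ℂ).restrict Γ).withDensity D)) := by
        rw [hemb.lintegral_map]
    _ = ∫⁻ w in g '' Γ, F w ∂(μH[1] : Measure ℂ) := by rw [hν]
end

section
/- Let Γ ⊆ ℂ and z ∈ ℂ. Suppose there exist s₀ > 0, ρ > 0, and γ : ℝ → ℂ such that: γ(0) = z; γ is injective on [−s₀, s₀]; γ is 1-Lipschitz on [−s₀, s₀] (i.e., |γ(s) − γ(t)| ≤ |s − t| for s, t ∈ [−s₀, s₀]); γ is differentiable at 0 with |γ'(0)| = 1; and Γ ∩ D(z, ρ) ⊆ γ([−s₀, s₀]). Let g : [0,∞) → [0,∞) be continuous and nondecreasing with g(0) = 0. Then lim_{ε → 0⁺} ∫_{Γ ∩ ( D̄(z, ε(1 + g(ε))) \ D(z, ε(1 − g(ε))) )} |z' − z|^{−1} dμ(z') = 0, where D̄(z,r) denotes the closed disk and D(z,r)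 the open disk of radius r centered at z. -/
open MeasureTheory Metric Filter Topology

set_option maxHeartbeats 1600000 in
/-- Suppose `Γ ⊆ ℂ` coincides near `z` with an arc parametrized
by a 1-Lipschitz injective map `γ` with `γ(0) = z`, differentiable at `0` with
`|γ'(0)| = 1` (a two-sided tangent at `z`). Let `g : [0,∞) → [0,∞)` be
continuous, nondecreasing, with `g(0) = 0`. Then
`∫_{Γ ∩ (D̄(z, ε(1+g(ε))) \ D(z, ε(1-g(ε))))} |z' - z|⁻¹ dμ(z') → 0` as
`ε → 0⁺`. -/
theorem statement18 (Γ : Set ℂ) (z : ℂ) (s₀ ρ : ℝ) (hs₀ : 0 < s₀) (hρ : 0 < ρ)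
    (γ : ℝ → ℂ) (hγ0 : γ 0 = z)
    (hinj : Set.InjOn γ (Set.Icc (-s₀) s₀))
    (hlip : LipschitzOnWith 1 γ (Set.Icc (-s₀) s₀))
    (hderiv : ∃ v : ℂ, HasDerivAt γ v 0 ∧ ‖v‖ = 1)
    (hloc : Γ ∩ ball z ρ ⊆ γ '' Set.Icc (-s₀) s₀)
    (g : ℝ → ℝ) (hg_cont : ContinuousOn g (Set.Ici 0))
    (hg_mono : MonotoneOn g (Set.Ici 0))
    (hg_nonneg : ∀ x ∈ Set.Ici (0 : ℝ), 0 ≤ g x) (hg0 : g 0 = 0) :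
    Tendsto
      (fun ε : ℝ =>
        ∫⁻ z' in Γ ∩ (closedBall z (ε * (1 + g ε)) \ ball z (ε * (1 - g ε))),
          (ENNReal.ofReal (‖z' - z‖))⁻¹ ∂(μH[1] : Measure ℂ))
      (nhdsWithin 0 (Set.Ioi 0)) (nhds 0) := by
  obtain ⟨v, hv, hv1⟩ := hderiv
  have h0I : (0 : ℝ) ∈ Set.Icc (-s₀) s₀ := ⟨by linarith, hs₀.le⟩
  rw [ENNReal.tendsto_nhds_zero]
  suffices H : ∀ r : ℝ, 0 < r → r ≤ 1 →
      ∀ᶠ ε in 𝓝[>] (0:ℝ),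
        (∫⁻ z' in Γ ∩ (closedBall z (ε * (1 + g ε)) \ ball z (ε * (1 - g ε))),
          (ENNReal.ofReal (‖z' - z‖))⁻¹ ∂(μH[1] : Measure ℂ))
          ≤ ENNReal.ofReal r by
    intro η hη
    rcases eq_top_or_lt_top η with htop | htop
    · filter_upwards [H 1 one_pos le_rfl] with ε _
      exact htop ▸ le_top
    · have hto : 0 < η.toReal := ENNReal.toReal_pos hη.ne' htop.ne
      filter_upwards [H (min 1 η.toReal) (lt_min one_pos hto) (min_le_left _ _)] with ε hε
      refine hε.trans ?_
      calc ENNReal.ofReal (min 1 η.toReal) ≤ ENNReal.ofReal η.toReal :=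
            ENNReal.ofReal_le_ofReal (min_le_right _ _)
        _ = η := ENNReal.ofReal_toReal htop.ne
  intro r hr hr1
  set q : ℝ := 1 + r / 16 with hq_def
  have hq1 : 1 < q := by simp [hq_def]; positivity
  have hqpos : 0 < q := by linarith
  -- slope condition near 0
  have hslope : Tendsto (fun s => ‖slope γ 0 s‖) (𝓝[≠] (0:ℝ)) (𝓝 1) := by
    have h1 : Tendsto (slope γ 0) (𝓝[≠] (0:ℝ)) (𝓝 v) :=
      hasDerivAt_iff_tendsto_slope.mp hv
    have := h1.norm
    rwa [hv1] at this
  have hsl : ∀ᶠ s in 𝓝[≠] (0:ℝ), 1/q < ‖slope γ 0 s‖ :=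
    hslope.eventually (eventually_gt_nhds (by rw [div_lt_one hqpos]; exact hq1))
  rw [eventually_nhdsWithin_iff, Metric.eventually_nhds_iff] at hsl
  obtain ⟨δ₀, hδ₀pos, hδ₀⟩ := hsl
  set δ : ℝ := min (δ₀ / 2) s₀ with hδ_def
  have hδpos : 0 < δ := lt_min (by linarith) hs₀
  have hδs₀ : δ ≤ s₀ := min_le_right _ _
  have hslope' : ∀ s : ℝ, s ≠ 0 → |s| ≤ δ → |s| < q * ‖γ s - z‖ := by
    intro s hs hsδ
    have hdist : dist s 0 < δ₀ := by
      rw [Real.dist_eq, sub_zero]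
      calc |s| ≤ δ := hsδ
        _ ≤ δ₀ / 2 := min_le_left _ _
        _ < δ₀ := by linarith
    have h1 := hδ₀ hdist (by simpa using hs)
    have habs : 0 < |s| := abs_pos.mpr hs
    have hnorm : ‖slope γ 0 s‖ = |s|⁻¹ * ‖γ s - z‖ := by
      simp [slope, norm_smul, Real.norm_eq_abs, abs_inv, sub_zero, hγ0]
    rw [hnorm, inv_mul_eq_div, div_lt_div_iff₀ hqpos habs] at h1
    linarith
  -- positive lower bound away from 0
  set K : Set ℝ := Set.Icc (-s₀) s₀ ∩ {s : ℝ | δ ≤ |s|} with hK_def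
  have hKcl : IsClosed {s : ℝ | δ ≤ |s|} := isClosed_le continuous_const continuous_abs
  have hKc : IsCompact K := isCompact_Icc.inter_right hKcl
  have hKne : K.Nonempty := ⟨s₀, ⟨by linarith, le_rfl⟩, by
    simpa [abs_of_pos hs₀] using hδs₀⟩
  have hγcont : ContinuousOn γ (Set.Icc (-s₀) s₀) := hlip.continuousOn
  have hfcont : ContinuousOn (fun s => ‖γ s - z‖) K :=
    continuous_norm.comp_continuousOn
      ((hγcont.mono Set.inter_subset_left).sub continuousOn_const)
  obtain ⟨s₁, hs₁K, hmin⟩ := hKc.exists_isMinOn hKne hfcont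
  set m : ℝ := ‖γ s₁ - z‖ with hm_def
  have hs₁ne : s₁ ≠ 0 := by
    intro h
    have := hs₁K.2
    rw [h] at this
    simp at this
    linarith
  have hmpos : 0 < m := by
    have hne : γ s₁ ≠ z := by
      intro h
      exact hs₁ne (hinj hs₁K.1 h0I (h.trans hγ0.symm))
    simpa [hm_def] using (norm_pos_iff.mpr (sub_ne_zero.mpr hne))
  have hmin' : ∀ s ∈ K, m ≤ ‖γ s - z‖ := isMinOn_iff.mp hmin
  -- eventual smallness of g
  have hgtend : Tendsto g (𝓝[>] (0:ℝ)) (𝓝 0) := by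
    have := (hg_cont 0 Set.self_mem_Ici).tendsto
    rw [hg0] at this
    exact this.mono_left (nhdsWithin_mono 0 Set.Ioi_subset_Ici_self)
  have hgev : ∀ᶠ ε in 𝓝[>] (0:ℝ), g ε < min (1/2) (r/32) :=
    hgtend.eventually (eventually_lt_nhds (by positivity))
  have ht₁pos : 0 < min (ρ/2) (min (m/2) (δ/(2*q))) := by positivity
  filter_upwards [hgev, Ioo_mem_nhdsGT ht₁pos] with ε hgε hεt
  obtain ⟨hεpos, hεlt⟩ := hεt
  have hερ : ε < ρ/2 := hεlt.trans_le (min_le_left _ _)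
  have hεm : ε < m/2 := hεlt.trans_le ((min_le_right _ _).trans (min_le_left _ _))
  have hεδ : ε < δ/(2*q) := hεlt.trans_le ((min_le_right _ _).trans (min_le_right _ _))
  have hge0 : 0 ≤ g ε := hg_nonneg ε hεpos.le
  have hgε2 : g ε < 1/2 := hgε.trans_le (min_le_left _ _)
  have hgεr : g ε ≤ r/32 := (hgε.trans_le (min_le_right _ _)).le
  set a : ℝ := ε * (1 - g ε) with ha_def
  set b : ℝ := ε * (1 + g ε) with hb_def
  have ha : 0 < a := by rw [ha_def]; nlinarith
  have hab : a ≤ b := by rw [ha_def, hb_def]; nlinarith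
  have hbρ : b < ρ := by rw [hb_def]; nlinarith
  have hbm : b < m := by rw [hb_def]; nlinarith
  have hqb : q * b ≤ δ := by
    have : 2 * q * ε < δ := by
      rw [lt_div_iff₀ (by positivity)] at hεδ; linarith
    rw [hb_def]; nlinarith
  set A : Set ℂ := Γ ∩ (closedBall z b \ ball z a) with hA_def
  set S : Set ℝ := Set.Icc (-s₀) s₀ ∩ {s : ℝ | a ≤ |s| ∧ |s| ≤ q * b} with hS_def
  -- A ⊆ γ '' S
  have hsub : A ⊆ γ '' S := by
    rintro z' ⟨hz'Γ, hz'cb, hz'b⟩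
    have hd2 : dist z' z ≤ b := mem_closedBall.mp hz'cb
    have hd1 : a ≤ dist z' z := le_of_not_gt (fun h => hz'b (mem_ball.mpr h))
    obtain ⟨s, hsI, hγs⟩ := hloc ⟨hz'Γ, mem_ball.mpr (hd2.trans_lt hbρ)⟩
    have hdistabs : dist z' z = ‖γ s - z‖ := by
      rw [← hγs, Complex.dist_eq]
    have hlipb : ‖γ s - z‖ ≤ |s| := by
      have h1 := hlip.dist_le_mul s hsI 0 h0I
      rw [hγ0, NNReal.coe_one, one_mul, Real.dist_eq, sub_zero, Complex.dist_eq] at h1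
      exact h1
    have hsa : a ≤ |s| := le_trans (hdistabs ▸ hd1) hlipb
    have hsne : s ≠ 0 := by
      intro h; rw [h] at hsa; simp at hsa; linarith
    have hsδ : |s| ≤ δ := by
      by_contra hcon
      push_neg at hcon
      have hsK : s ∈ K := ⟨hsI, hcon.le⟩
      have := hmin' s hsK
      rw [← hdistabs] at this
      linarith [hd2.trans_lt hbm]
    have hsqb : |s| ≤ q * b := by
      have := hslope' s hsne hsδ
      have h2 : ‖γ s - z‖ ≤ b := hdistabs ▸ hd2
      nlinarith
    exact ⟨s, ⟨hsI, hsa, hsqb⟩, hγs⟩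
  -- measure bound
  have hSsub : S ⊆ Set.Icc a (q*b) ∪ Set.Icc (-(q*b)) (-a) := by
    rintro s ⟨_, h1, h2⟩
    rcases le_or_gt 0 s with hs | hs
    · left; rw [abs_of_nonneg hs] at h1 h2; exact ⟨h1, h2⟩
    · right; rw [abs_of_neg hs] at h1 h2; constructor <;> linarith
  have hμA : (μH[1] : Measure ℂ) A ≤
      ENNReal.ofReal (q*b - a) + ENNReal.ofReal (q*b - a) := by
    calc (μH[1] : Measure ℂ) A ≤ μH[1] (γ '' S) := measure_mono hsub
      _ ≤ ((1:NNReal) : ENNReal) ^ (1:ℝ) * μH[1] S :=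
          (hlip.mono Set.inter_subset_left).hausdorffMeasure_image_le zero_le_one
      _ = μH[1] S := by simp
      _ = volume S := by rw [MeasureTheory.hausdorffMeasure_real]
      _ ≤ volume (Set.Icc a (q*b) ∪ Set.Icc (-(q*b)) (-a)) := measure_mono hSsub
      _ ≤ volume (Set.Icc a (q*b)) + volume (Set.Icc (-(q*b)) (-a)) :=
          measure_union_le _ _
      _ = ENNReal.ofReal (q*b - a) + ENNReal.ofReal (q*b - a) := by
          rw [Real.volume_Icc, Real.volume_Icc]; ring_nf
  -- pointwise bound on the integrand
  have hBmeas : MeasurableSet (closedBall z b \ ball z a) :=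
    measurableSet_closedBall.diff measurableSet_ball
  have hae : ∀ᵐ z' ∂((μH[1] : Measure ℂ).restrict A),
      (ENNReal.ofReal (‖z' - z‖))⁻¹ ≤ (ENNReal.ofReal a)⁻¹ := by
    have hmono : (μH[1] : Measure ℂ).restrict A ≤
        (μH[1] : Measure ℂ).restrict (closedBall z b \ ball z a) :=
      Measure.restrict_mono Set.inter_subset_right le_rfl
    refine Eventually.filter_mono (ae_mono hmono) ?_
    filter_upwards [ae_restrict_mem hBmeas] with z' hz'
    have h1 : a ≤ ‖z' - z‖ := by
      have := hz'.2
      rw [mem_ball, Complex.dist_eq, not_lt] at this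
      exact this
    exact ENNReal.inv_le_inv.mpr (ENNReal.ofReal_le_ofReal h1)
  have hkey : (q*b - a) + (q*b - a) ≤ r * a := by
    rw [ha_def, hb_def, hq_def]; nlinarith
  calc (∫⁻ z' in Γ ∩ (closedBall z (ε * (1 + g ε)) \ ball z (ε * (1 - g ε))),
          (ENNReal.ofReal (‖z' - z‖))⁻¹ ∂(μH[1] : Measure ℂ))
      = ∫⁻ z' in A, (ENNReal.ofReal (‖z' - z‖))⁻¹ ∂(μH[1] : Measure ℂ) := rfl
    _ ≤ ∫⁻ _ in A, (ENNReal.ofReal a)⁻¹ ∂(μH[1] : Measure ℂ) := lintegral_mono_ae hae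
    _ = (ENNReal.ofReal a)⁻¹ * (μH[1] : Measure ℂ) A := setLIntegral_const _ _
    _ ≤ (ENNReal.ofReal a)⁻¹ * (ENNReal.ofReal r * ENNReal.ofReal a) := by
        refine mul_le_mul_right (hμA.trans ?_) _
        rw [← ENNReal.ofReal_add (by nlinarith) (by nlinarith), ← ENNReal.ofReal_mul hr.le]
        exact ENNReal.ofReal_le_ofReal hkey
    _ = ENNReal.ofReal r := by
        rw [mul_comm (ENNReal.ofReal r), ← mul_assoc,
          ENNReal.inv_mul_cancel (ENNReal.ofReal_pos.mpr ha).ne' ENNReal.ofReal_ne_top,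
          one_mul]
end
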